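/- arXiv:1509.02251 — 4 statements merged into one kernel-verified Lean document; each statement's English description precedes it below -/
import Mathlib

section
/- Let g be the Green function of a transient reversible random walk on a locally finite connected weighted graph with sup_x g(x,x) = g₀ < ∞. Then for every starting point x, P_x-almost surely cap({Z₀, Z₁, …, Z_k}) → ∞ as k → ∞. -/
open MeasureTheory

open scoped ENNReal

/-- capacity of a finite set, defined through the variational formula
cap(C) = sup { E(μ,μ)⁻¹ : μ probability measure supported on C }. -/
noncomputable def capacity {E : Type*} (g : E → E → ℝ) (C : Finset E) : ℝ :=
  sSup {t : ℝ | ∃ μ : E → ℝ, (∀ x, 0 ≤ μ x) ∧ (∀ x, μ x ≠ 0 → x ∈ C) ∧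
    (∑ x ∈ C, μ x = 1) ∧ t = (∑ x ∈ C, ∑ y ∈ C, μ x * g x y * μ y)⁻¹}

set_option linter.unusedSectionVars false
set_option linter.unusedVariables false
set_option maxHeartbeats 1600000

section walkAux
variable {E : Type*} [Countable E] [DecidableEq E] [MeasurableSpace E] [MeasurableSingletonClass E]


/-- product of transition probabilities along a finite path -/
noncomputable def stmt4PathProd (p : E → E → ℝ≥0∞) (n : ℕ) (u : Fin (n+1) → E) : ℝ≥0∞ :=
  ∏ i : Fin n, p (u i.castSucc) (u i.succ)

theorem stmt4_qFull (p : E → E → ℝ≥0∞) (P : E → Measure (ℕ → E))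
    (hFDD : ∀ (x : E) (n : ℕ) (w : Fin (n + 1) → E),
      P x {ω | ∀ i : Fin (n + 1), ω i = w i} =
        (if w 0 = x then 1 else 0) * ∏ i : Fin n, p (w i.castSucc) (w i.succ))
    (x y : E) (n : ℕ) :
    P x {ω | ω n = y} =
      ∑' u : Fin (n+1) → E,
        (if u 0 = x ∧ u (Fin.last n) = y then stmt4PathProd p n u else 0) := by
  classical
  set S : (Fin (n+1) → E) → Set (ℕ → E) := fun u => {ω | ∀ i : Fin (n + 1), ω i = u i} with hS
  have hmeas : ∀ u, MeasurableSet (S u) := by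
    intro u
    have : S u = ⋂ i : Fin (n+1), (fun ω : ℕ → E => ω (i : ℕ)) ⁻¹' {u i} := by
      ext ω; simp [hS, Set.mem_iInter]
    rw [this]
    exact MeasurableSet.iInter fun i => (measurable_pi_apply _) (measurableSet_singleton _)
  have hdisj : Pairwise (Function.onFun Disjoint
      (fun u : {u : Fin (n+1) → E // u (Fin.last n) = y} => S u.1)) := by
    intro u v huv
    rw [Function.onFun, Set.disjoint_left]
    intro ω hωu hωv
    apply huv
    apply Subtype.ext
    funext i
    rw [← hωu i, ← hωv i]
  have hunion : {ω : ℕ → E | ω n = y} =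
      ⋃ u : {u : Fin (n+1) → E // u (Fin.last n) = y}, S u.1 := by
    ext ω
    constructor
    · intro hω
      refine Set.mem_iUnion.2 ⟨⟨fun i => ω i, ?_⟩, ?_⟩
      · simpa [Fin.val_last] using hω
      · intro i; rfl
    · rintro hω
      rcases Set.mem_iUnion.1 hω with ⟨u, hu⟩
      have := hu (Fin.last n)
      simp only [Fin.val_last] at this
      rw [Set.mem_setOf_eq, this, u.2]
  rw [hunion, measure_iUnion hdisj (fun u => hmeas u.1)]
  have : ∀ u : {u : Fin (n+1) → E // u (Fin.last n) = y},
      P x (S u.1) = (if u.1 0 = x ∧ u.1 (Fin.last n) = y then stmt4PathProd p n u.1 else 0) := by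
    intro u
    rw [hFDD x n u.1]
    rcases u with ⟨u, hu⟩
    by_cases h : u 0 = x <;> simp [h, hu, stmt4PathProd]
  rw [tsum_congr this]
  have key := tsum_subtype {u : Fin (n+1) → E | u (Fin.last n) = y}
    (fun u => if u 0 = x ∧ u (Fin.last n) = y then stmt4PathProd p n u else 0)
  rw [show (∑' (b : {u : Fin (n+1) → E // u (Fin.last n) = y}),
      if b.1 0 = x ∧ b.1 (Fin.last n) = y then stmt4PathProd p n b.1 else 0) =
      ∑' (b : ({u : Fin (n+1) → E | u (Fin.last n) = y} : Set _)),
      if b.1 0 = x ∧ b.1 (Fin.last n) = y then stmt4PathProd p n b.1 else 0 from rfl, key]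
  apply tsum_congr
  intro u
  by_cases h : u (Fin.last n) = y <;> simp [Set.indicator_apply, h]



theorem stmt4_snoc (p : E → E → ℝ≥0∞) (n : ℕ) (v : Fin (n+1) → E) (z : E) :
    stmt4PathProd p (n+1) (Fin.snoc v z) =
      stmt4PathProd p n v * p (v (Fin.last n)) z := by
  unfold stmt4PathProd
  rw [Fin.prod_univ_castSucc]
  congr 1
  · apply Finset.prod_congr rfl
    intro i _
    rw [Fin.succ_castSucc]
    simp only [Fin.snoc_castSucc]
  · rw [Fin.succ_last]
    simp [Fin.snoc_castSucc, Fin.snoc_last]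

def stmt4SnocEquiv (E : Type*) (n : ℕ) : ((Fin (n+1) → E) × E) ≃ (Fin (n+2) → E) where
  toFun vz := Fin.snoc vz.1 vz.2
  invFun u := (Fin.init u, u (Fin.last (n+1)))
  left_inv := by rintro ⟨v, z⟩; simp [Fin.init_snoc, Fin.snoc_last]
  right_inv := by intro u; simp [Fin.snoc_init_self]

theorem stmt4_oneStep (p : E → E → ℝ≥0∞) (P : E → Measure (ℕ → E))
    (hFDD : ∀ (x : E) (n : ℕ) (w : Fin (n + 1) → E),
      P x {ω | ∀ i : Fin (n + 1), ω i = w i} =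
        (if w 0 = x then 1 else 0) * ∏ i : Fin n, p (w i.castSucc) (w i.succ))
    (hqFull : ∀ (x y : E) (n : ℕ), P x {ω | ω n = y} =
      ∑' u : Fin (n+1) → E,
        (if u 0 = x ∧ u (Fin.last n) = y then stmt4PathProd p n u else 0))
    (x y : E) (n : ℕ) :
    P x {ω | ω (n+1) = y} = ∑' z, P x {ω | ω n = z} * p z y := by
  classical
  rw [hqFull x y (n+1)]
  rw [← Equiv.tsum_eq (stmt4SnocEquiv E n)]
  have lhs_eq : ∀ vz : (Fin (n+1) → E) × E,
      (if (stmt4SnocEquiv E n) vz 0 = x ∧ (stmt4SnocEquiv E n) vz (Fin.last (n+1)) = y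
        then stmt4PathProd p (n+1) ((stmt4SnocEquiv E n) vz) else 0)
      = (if vz.1 0 = x ∧ vz.2 = y then stmt4PathProd p n vz.1 * p (vz.1 (Fin.last n)) vz.2 else 0) := by
    rintro ⟨v, z⟩
    have h0 : (Fin.snoc v z : Fin (n+2) → E) 0 = v 0 := by
      have : (0 : Fin (n+2)) = (0 : Fin (n+1)).castSucc := rfl
      rw [this, Fin.snoc_castSucc]
    have hl : (Fin.snoc v z : Fin (n+2) → E) (Fin.last (n+1)) = z := Fin.snoc_last _ _
    simp only [stmt4SnocEquiv, Equiv.coe_fn_mk, h0, hl, stmt4_snoc]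
  rw [tsum_congr lhs_eq, ENNReal.tsum_prod (f := fun v z =>
    if v 0 = x ∧ z = y then stmt4PathProd p n v * p (v (Fin.last n)) z else 0)]
  have inner_eq : ∀ v : Fin (n+1) → E,
      (∑' z, if v 0 = x ∧ z = y then stmt4PathProd p n v * p (v (Fin.last n)) z else 0)
      = (if v 0 = x then stmt4PathProd p n v * p (v (Fin.last n)) y else 0) := by
    intro v
    rw [tsum_eq_single y (fun z hz => by simp [hz])]
    by_cases hv : v 0 = x <;> simp [hv]
  rw [tsum_congr inner_eq]
  -- now the RHS
  have rhs_eq : ∀ z : E, P x {ω | ω n = z} * p z y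
      = ∑' v : Fin (n+1) → E,
          (if v 0 = x ∧ v (Fin.last n) = z then stmt4PathProd p n v * p z y else 0) := by
    intro z
    rw [hqFull x z n, ← ENNReal.tsum_mul_right]
    apply tsum_congr
    intro v
    by_cases h : v 0 = x ∧ v (Fin.last n) = z <;> simp [h]
  rw [tsum_congr rhs_eq, ENNReal.tsum_comm]
  apply tsum_congr
  intro v
  rw [tsum_eq_single (v (Fin.last n)) (fun z hz => by
    have hne : ¬ (v (Fin.last n) = z) := fun h => hz h.symm
    simp [hne])]
  by_cases hv : v 0 = x <;> simp [hv]



theorem stmt4_qZero (p : E → E → ℝ≥0∞) (P : E → Measure (ℕ → E))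
    (hqFull : ∀ (x y : E) (n : ℕ), P x {ω | ω n = y} =
      ∑' u : Fin (n+1) → E,
        (if u 0 = x ∧ u (Fin.last n) = y then stmt4PathProd p n u else 0))
    (x y : E) : P x {ω | ω 0 = y} = if x = y then 1 else 0 := by
  classical
  rw [hqFull x y 0]
  rw [← Equiv.tsum_eq (Equiv.funUnique (Fin 1) E).symm]
  have : ∀ z : E,
      (if (Equiv.funUnique (Fin 1) E).symm z 0 = x ∧
          (Equiv.funUnique (Fin 1) E).symm z (Fin.last 0) = y
        then stmt4PathProd p 0 ((Equiv.funUnique (Fin 1) E).symm z) else 0)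
      = (if z = x ∧ z = y then 1 else 0) := by
    intro z
    simp [Equiv.funUnique, stmt4PathProd]
  rw [tsum_congr this, tsum_eq_single x (fun z hz => by simp [hz])]
  by_cases h : x = y <;> simp [h]

theorem stmt4_CK (p : E → E → ℝ≥0∞) (P : E → Measure (ℕ → E))
    (hqZero : ∀ x y : E, P x {ω | ω 0 = y} = if x = y then 1 else 0)
    (hOne : ∀ (x y : E) (n : ℕ),
      P x {ω | ω (n+1) = y} = ∑' z, P x {ω | ω n = z} * p z y)
    (x y : E) (n m : ℕ) :
    P x {ω | ω (n+m) = y} = ∑' z, P x {ω | ω n = z} * P z {ω | ω m = y} := by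
  classical
  induction m generalizing y with
  | zero =>
    simp only [Nat.add_zero, hqZero]
    rw [tsum_eq_single y (fun z hz => by simp [hz])]
    simp
  | succ m ih =>
    have : n + (m+1) = (n+m) + 1 := by omega
    rw [this, hOne x y (n+m)]
    have step : ∀ z : E, P x {ω | ω (n+m) = z} * p z y
        = ∑' w, P x {ω | ω n = w} * (P w {ω | ω m = z} * p z y) := by
      intro z
      rw [ih z, ← ENNReal.tsum_mul_right]
      exact tsum_congr fun w => mul_assoc _ _ _
    rw [tsum_congr step, ENNReal.tsum_comm]
    apply tsum_congr
    intro w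
    rw [ENNReal.tsum_mul_left, hOne w y m]



theorem stmt4_telescope (lam : E → ℝ) (p : E → E → ℝ≥0∞)
    (hrev : ∀ x y, ENNReal.ofReal (lam x) * p x y = ENNReal.ofReal (lam y) * p y x)
    (n : ℕ) (v : ℕ → E) :
    ENNReal.ofReal (lam (v 0)) * ∏ i ∈ Finset.range n, p (v i) (v (i+1)) =
    ENNReal.ofReal (lam (v n)) * ∏ i ∈ Finset.range n, p (v (i+1)) (v i) := by
  induction n with
  | zero => simp
  | succ n ih =>
    rw [Finset.prod_range_succ, Finset.prod_range_succ]
    calc ENNReal.ofReal (lam (v 0)) *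
          ((∏ i ∈ Finset.range n, p (v i) (v (i+1))) * p (v n) (v (n+1)))
        = (ENNReal.ofReal (lam (v 0)) * ∏ i ∈ Finset.range n, p (v i) (v (i+1)))
            * p (v n) (v (n+1)) := by ring
      _ = (ENNReal.ofReal (lam (v n)) * ∏ i ∈ Finset.range n, p (v (i+1)) (v i))
            * p (v n) (v (n+1)) := by rw [ih]
      _ = (∏ i ∈ Finset.range n, p (v (i+1)) (v i))
            * (ENNReal.ofReal (lam (v n)) * p (v n) (v (n+1))) := by ring
      _ = (∏ i ∈ Finset.range n, p (v (i+1)) (v i))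
            * (ENNReal.ofReal (lam (v (n+1))) * p (v (n+1)) (v n)) := by rw [hrev]
      _ = _ := by ring

theorem stmt4_pathProd_range (p : E → E → ℝ≥0∞) (n : ℕ) (u : Fin (n+1) → E) :
    stmt4PathProd p n u = ∏ i ∈ Finset.range n,
      p (u ⟨min i n, by omega⟩) (u ⟨min (i+1) n, by omega⟩) := by
  rw [← Fin.prod_univ_eq_prod_range (fun i => p (u ⟨min i n, by omega⟩) (u ⟨min (i+1) n, by omega⟩)) n]
  unfold stmt4PathProd
  apply Finset.prod_congr rfl
  intro i _
  congr 1
  · congr 1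
    exact Fin.ext (by simp only [Fin.coe_castSucc]; omega)
  · congr 1
    exact Fin.ext (by simp [Fin.val_succ])

theorem stmt4_PP_rev (lam : E → ℝ) (p : E → E → ℝ≥0∞)
    (hrev : ∀ x y, ENNReal.ofReal (lam x) * p x y = ENNReal.ofReal (lam y) * p y x)
    (n : ℕ) (u : Fin (n+1) → E) :
    ENNReal.ofReal (lam (u 0)) * stmt4PathProd p n u =
    ENNReal.ofReal (lam (u (Fin.last n))) * stmt4PathProd p n (u ∘ Fin.rev) := by
  set v : ℕ → E := fun i => u ⟨min i n, by omega⟩ with hv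
  have hPP : stmt4PathProd p n u = ∏ i ∈ Finset.range n, p (v i) (v (i+1)) :=
    stmt4_pathProd_range p n u
  have hu0 : u 0 = v 0 := by
    simp only [hv]; congr 1
  have hulast : u (Fin.last n) = v n := by
    simp only [hv]; congr 1; exact Fin.ext (by simp [Fin.val_last])
  have hrevPP : stmt4PathProd p n (u ∘ Fin.rev) =
      ∏ i ∈ Finset.range n, p (v (i+1)) (v i) := by
    rw [stmt4_pathProd_range p n (u ∘ Fin.rev)]
    rw [← Finset.prod_range_reflect (fun j => p (v (j+1)) (v j)) n]
    apply Finset.prod_congr rfl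
    intro j hj
    have hj' : j < n := Finset.mem_range.1 hj
    have h1 : (u ∘ Fin.rev) ⟨min j n, by omega⟩ = v (n - j) := by
      simp only [Function.comp_apply, hv]
      congr 1
      exact Fin.ext (by simp [Fin.val_rev]; omega)
    have h2 : (u ∘ Fin.rev) ⟨min (j+1) n, by omega⟩ = v (n - j - 1) := by
      simp only [Function.comp_apply, hv]
      congr 1
      exact Fin.ext (by simp [Fin.val_rev]; omega)
    rw [h1, h2]
    have e1 : n - 1 - j + 1 = n - j := by omega
    have e2 : n - 1 - j = n - j - 1 := by omega
    rw [e1, e2]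
  rw [hPP, hu0, hulast, hrevPP]
  exact stmt4_telescope lam p hrev n v



def stmt4RevEquiv (E : Type*) (n : ℕ) : (Fin (n+1) → E) ≃ (Fin (n+1) → E) where
  toFun u := u ∘ Fin.rev
  invFun u := u ∘ Fin.rev
  left_inv u := by funext i; simp [Fin.rev_rev]
  right_inv u := by funext i; simp [Fin.rev_rev]

theorem stmt4_rev (lam : E → ℝ) (p : E → E → ℝ≥0∞) (P : E → Measure (ℕ → E))
    (hrev : ∀ x y, ENNReal.ofReal (lam x) * p x y = ENNReal.ofReal (lam y) * p y x)
    (hPPrev : ∀ (n : ℕ) (u : Fin (n+1) → E),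
      ENNReal.ofReal (lam (u 0)) * stmt4PathProd p n u =
      ENNReal.ofReal (lam (u (Fin.last n))) * stmt4PathProd p n (u ∘ Fin.rev))
    (hqFull : ∀ (x y : E) (n : ℕ), P x {ω | ω n = y} =
      ∑' u : Fin (n+1) → E,
        (if u 0 = x ∧ u (Fin.last n) = y then stmt4PathProd p n u else 0))
    (x y : E) (n : ℕ) :
    ENNReal.ofReal (lam x) * P x {ω | ω n = y} =
    ENNReal.ofReal (lam y) * P y {ω | ω n = x} := by
  classical
  rw [hqFull x y n, hqFull y x n, ← ENNReal.tsum_mul_left, ← ENNReal.tsum_mul_left]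
  rw [← Equiv.tsum_eq (stmt4RevEquiv E n) (fun u => ENNReal.ofReal (lam y) *
      (if u 0 = y ∧ u (Fin.last n) = x then stmt4PathProd p n u else 0))]
  apply tsum_congr
  intro u
  have he : (stmt4RevEquiv E n) u = u ∘ Fin.rev := rfl
  have h0 : ((stmt4RevEquiv E n) u) 0 = u (Fin.last n) := by rw [he]; simp [Function.comp, Fin.rev_zero]
  have hl : ((stmt4RevEquiv E n) u) (Fin.last n) = u 0 := by rw [he]; simp [Function.comp, Fin.rev_last]
  by_cases h : u 0 = x ∧ u (Fin.last n) = y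
  · rw [if_pos h, if_pos (by rw [h0, hl]; exact ⟨h.2, h.1⟩)]
    rw [← h.1, ← h.2, he]
    exact hPPrev n u
  · rw [if_neg h, if_neg (by rw [h0, hl]; tauto), mul_zero, mul_zero]

theorem stmt4_gsymm (lam : E → ℝ) (hlam : ∀ x, 0 < lam x) (P : E → Measure (ℕ → E))
    (hfin : ∀ x y : E, (∑' k : ℕ, P x {ω | ω k = y}) < ⊤)
    (g : E → E → ℝ)
    (hg : ∀ x y, g x y = ((∑' k : ℕ, P x {ω | ω k = y}).toReal) / lam y)
    (hrevn : ∀ (x y : E) (n : ℕ),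
      ENNReal.ofReal (lam x) * P x {ω | ω n = y} =
      ENNReal.ofReal (lam y) * P y {ω | ω n = x}) :
    ∀ x y, g x y = g y x := by
  intro x y
  have hsum : ENNReal.ofReal (lam x) * (∑' k : ℕ, P x {ω | ω k = y}) =
      ENNReal.ofReal (lam y) * (∑' k : ℕ, P y {ω | ω k = x}) := by
    rw [← ENNReal.tsum_mul_left, ← ENNReal.tsum_mul_left]
    exact tsum_congr fun k => hrevn x y k
  have hreal : lam x * (∑' k : ℕ, P x {ω | ω k = y}).toReal =
      lam y * (∑' k : ℕ, P y {ω | ω k = x}).toReal := by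
    have := congrArg ENNReal.toReal hsum
    rwa [ENNReal.toReal_mul, ENNReal.toReal_mul, ENNReal.toReal_ofReal (hlam x).le,
      ENNReal.toReal_ofReal (hlam y).le] at this
  rw [hg x y, hg y x]
  have hx := (hlam x).ne'
  have hy := (hlam y).ne'
  field_simp
  nlinarith [hreal]


theorem stmt4_lintegral_comp (P : E → Measure (ℕ → E)) (x : E) (k : ℕ) (f : E → ℝ≥0∞) :
    ∫⁻ ω, f (ω k) ∂(P x) = ∑' z, P x {ω | ω k = z} * f z := by
  classical
  have hmeas : ∀ z : E, MeasurableSet {ω : ℕ → E | ω k = z} :=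
    fun z => by
      have : {ω : ℕ → E | ω k = z} = (fun ω : ℕ → E => ω k) ⁻¹' {z} := rfl
      rw [this]
      exact measurable_pi_apply k (measurableSet_singleton z)
  have hfun : ∀ ω : ℕ → E, f (ω k) =
      ∑' z : E, Set.indicator {ω : ℕ → E | ω k = z} (fun _ => f z) ω := by
    intro ω
    rw [tsum_eq_single (ω k) (fun z hz => by
      simp [Set.indicator_apply, fun h : ω k = z => hz h.symm]
      intro h; exact absurd h.symm hz)]
    simp [Set.indicator_apply]
  calc ∫⁻ ω, f (ω k) ∂(P x)
      = ∫⁻ ω, ∑' z : E, Set.indicator {ω : ℕ → E | ω k = z} (fun _ => f z) ω ∂(P x) := by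
        exact lintegral_congr hfun
    _ = ∑' z : E, ∫⁻ ω, Set.indicator {ω : ℕ → E | ω k = z} (fun _ => f z) ω ∂(P x) := by
        exact lintegral_tsum fun z => (measurable_const.indicator (hmeas z)).aemeasurable
    _ = ∑' z : E, P x {ω | ω k = z} * f z := by
        apply tsum_congr
        intro z
        rw [lintegral_indicator (hmeas z), setLIntegral_const, mul_comm]

theorem stmt4_meas_from_countable (f : E → ℝ≥0∞) : Measurable f :=
  measurable_of_countable f


theorem stmt4_null (lam : E → ℝ) (hlam : ∀ x, 0 < lam x) (P : E → Measure (ℕ → E))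
    (hfin : ∀ x y : E, (∑' k : ℕ, P x {ω | ω k = y}) < ⊤)
    (g : E → E → ℝ)
    (hg : ∀ x y, g x y = ((∑' k : ℕ, P x {ω | ω k = y}).toReal) / lam y)
    (hpos : ∀ x y, 0 < g x y)
    (hLint : ∀ (x : E) (k : ℕ) (f : E → ℝ≥0∞),
      ∫⁻ ω, f (ω k) ∂(P x) = ∑' z, P x {ω | ω k = z} * f z)
    (hCK : ∀ (x y : E) (n m : ℕ),
      P x {ω | ω (n+m) = y} = ∑' z, P x {ω | ω n = z} * P z {ω | ω m = y})
    (x : E) (F : Finset E) (ε : ℝ) (hε : 0 < ε) (K : ℕ) :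
    P x {ω | ∀ k ≥ K, ε ≤ ∑ y ∈ F, g (ω k) y} = 0 := by
  classical
  set tail : ℕ → E → ℝ≥0∞ := fun k y => ∑' j : ℕ, P x {ω | ω (j + k) = y} with htail
  have hTail0 : ∀ y : E, Filter.Tendsto (fun k => tail k y) Filter.atTop (nhds 0) := by
    intro y
    exact ENNReal.tendsto_sum_nat_add (fun j => P x {ω | ω j = y}) (hfin x y).ne
  -- the integral identity
  have hofReal : ∀ z y : E, ENNReal.ofReal (g z y) =
      (∑' j : ℕ, P z {ω | ω j = y}) * (ENNReal.ofReal (lam y))⁻¹ := by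
    intro z y
    rw [hg z y, ENNReal.ofReal_div_of_pos (hlam y),
      ENNReal.ofReal_toReal (hfin z y).ne, div_eq_mul_inv]
  have hkernel : ∀ (k : ℕ) (y : E),
      (∑' z, P x {ω | ω k = z} * (∑' j : ℕ, P z {ω | ω j = y})) = tail k y := by
    intro k y
    have h1 : ∀ z : E, P x {ω | ω k = z} * (∑' j : ℕ, P z {ω | ω j = y})
        = ∑' j : ℕ, P x {ω | ω k = z} * P z {ω | ω j = y} := by
      intro z; rw [ENNReal.tsum_mul_left]
    rw [tsum_congr h1, ENNReal.tsum_comm]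
    rw [htail]
    apply tsum_congr
    intro j
    rw [Nat.add_comm j k, hCK x y k j]
  have hI : ∀ k : ℕ, ∫⁻ ω, ENNReal.ofReal (∑ y ∈ F, g (ω k) y) ∂(P x)
      = ∑ y ∈ F, tail k y * (ENNReal.ofReal (lam y))⁻¹ := by
    intro k
    rw [hLint x k (fun z => ENNReal.ofReal (∑ y ∈ F, g z y))]
    have h2 : ∀ z : E, P x {ω | ω k = z} * ENNReal.ofReal (∑ y ∈ F, g z y)
        = ∑ y ∈ F, P x {ω | ω k = z} * ((∑' j : ℕ, P z {ω | ω j = y}) * (ENNReal.ofReal (lam y))⁻¹) := by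
      intro z
      rw [ENNReal.ofReal_sum_of_nonneg (fun y _ => (hpos z y).le), Finset.mul_sum]
      exact Finset.sum_congr rfl fun y _ => by rw [hofReal z y]
    rw [tsum_congr h2, Summable.tsum_finsetSum (fun y _ => ENNReal.summable)]
    apply Finset.sum_congr rfl
    intro y _
    rw [← hkernel k y, ← ENNReal.tsum_mul_right]
    exact tsum_congr fun z => (mul_assoc _ _ _).symm
  -- limit of the bound
  set B : ℕ → ℝ≥0∞ := fun k => ∑ y ∈ F, tail k y * (ENNReal.ofReal (lam y))⁻¹ with hB
  have hB0 : Filter.Tendsto B Filter.atTop (nhds 0) := by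
    have : Filter.Tendsto B Filter.atTop (nhds (∑ y ∈ F, 0)) := by
      apply tendsto_finset_sum
      intro y _
      have hc : (ENNReal.ofReal (lam y))⁻¹ ≠ ⊤ :=
        ENNReal.inv_ne_top.2 (ENNReal.ofReal_pos.2 (hlam y)).ne'
      simpa using ENNReal.Tendsto.mul_const (hTail0 y) (Or.inr hc)
    simpa using this
  -- Markov bound
  have hεne : ENNReal.ofReal ε ≠ 0 := (ENNReal.ofReal_pos.2 hε).ne'
  have hεnetop : ENNReal.ofReal ε ≠ ⊤ := ENNReal.ofReal_ne_top
  have hbound : ∀ k ≥ K, P x {ω | ∀ k ≥ K, ε ≤ ∑ y ∈ F, g (ω k) y}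
      ≤ B k / ENNReal.ofReal ε := by
    intro k hk
    have hsub : {ω : ℕ → E | ∀ k ≥ K, ε ≤ ∑ y ∈ F, g (ω k) y}
        ⊆ {ω : ℕ → E | ENNReal.ofReal ε ≤ ENNReal.ofReal (∑ y ∈ F, g (ω k) y)} := by
      intro ω hω
      exact ENNReal.ofReal_le_ofReal (hω k hk)
    refine le_trans (measure_mono hsub) ?_
    rw [ENNReal.le_div_iff_mul_le (Or.inl hεne) (Or.inl hεnetop)]
    have hmf : AEMeasurable (fun ω : ℕ → E => ENNReal.ofReal (∑ y ∈ F, g (ω k) y)) (P x) :=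
      ((measurable_of_countable (fun z : E => ENNReal.ofReal (∑ y ∈ F, g z y))).comp
        (measurable_pi_apply k)).aemeasurable
    calc P x {ω | ENNReal.ofReal ε ≤ ENNReal.ofReal (∑ y ∈ F, g (ω k) y)} * ENNReal.ofReal ε
        = ENNReal.ofReal ε * P x {ω | ENNReal.ofReal ε ≤ ENNReal.ofReal (∑ y ∈ F, g (ω k) y)} :=
          mul_comm _ _
      _ ≤ ∫⁻ ω, ENNReal.ofReal (∑ y ∈ F, g (ω k) y) ∂(P x) :=
          mul_meas_ge_le_lintegral₀ hmf (ENNReal.ofReal ε)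
      _ = B k := hI k
  -- conclude
  have hlim : Filter.Tendsto (fun k => B k / ENNReal.ofReal ε) Filter.atTop (nhds 0) := by
    have h := ENNReal.Tendsto.mul_const hB0
      (Or.inr (ENNReal.inv_ne_top.2 hεne) : (0:ℝ≥0∞) ≠ 0 ∨ (ENNReal.ofReal ε)⁻¹ ≠ ⊤)
    simpa [div_eq_mul_inv] using h
  have : P x {ω | ∀ k ≥ K, ε ≤ ∑ y ∈ F, g (ω k) y} ≤ 0 := by
    refine ge_of_tendsto hlim ?_
    filter_upwards [Filter.eventually_ge_atTop K] with k hk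
    exact hbound k hk
  exact le_antisymm this zero_le


end walkAux

section detAux
variable {E : Type*} [DecidableEq E]

theorem stmt4_cap_lb (g : E → E → ℝ) (hpos : ∀ x y, 0 < g x y) (C : Finset E)
    (μ : E → ℝ) (hμ0 : ∀ x, 0 ≤ μ x) (hμs : ∀ x, μ x ≠ 0 → x ∈ C)
    (hμ1 : ∑ x ∈ C, μ x = 1)
    (e : ℝ) (hepos : 0 < e) (he : (∑ x ∈ C, ∑ y ∈ C, μ x * g x y * μ y) ≤ e) :
    e⁻¹ ≤ capacity g C := by
  classical
  have hC : C.Nonempty := by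
    by_contra hc
    rw [Finset.not_nonempty_iff_eq_empty.1 hc] at hμ1
    simp at hμ1
  -- every admissible energy is at least m / card C
  set m : ℝ := C.inf' hC (fun z => g z z) with hm
  have hmpos : 0 < m := by
    obtain ⟨z, hz, hzm⟩ := Finset.exists_mem_eq_inf' hC (fun z => g z z)
    rw [hm, hzm]; exact hpos z z
  have hcard : (0:ℝ) < C.card := by
    exact_mod_cast Finset.card_pos.2 hC
  have energy_lb : ∀ ν : E → ℝ, (∀ x, 0 ≤ ν x) → (∑ x ∈ C, ν x = 1) →
      m / C.card ≤ ∑ x ∈ C, ∑ y ∈ C, ν x * g x y * ν y := by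
    intro ν hν0 hν1
    have h1 : ∑ x ∈ C, ν x * g x x * ν x ≤ ∑ x ∈ C, ∑ y ∈ C, ν x * g x y * ν y := by
      apply Finset.sum_le_sum
      intro x hx
      exact Finset.single_le_sum (f := fun y => ν x * g x y * ν y)
        (fun y _ => mul_nonneg (mul_nonneg (hν0 x) (hpos x y).le) (hν0 y)) hx
    have h2 : ∀ x ∈ C, m * (ν x)^2 ≤ ν x * g x x * ν x := by
      intro x hx
      have : m ≤ g x x := Finset.inf'_le _ hx
      nlinarith [hν0 x]
    have h3 : m * ∑ x ∈ C, (ν x)^2 ≤ ∑ x ∈ C, ν x * g x x * ν x := by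
      rw [Finset.mul_sum]
      exact Finset.sum_le_sum h2
    have h4 : (1:ℝ) ≤ C.card * ∑ x ∈ C, (ν x)^2 := by
      have := Finset.sum_mul_sq_le_sq_mul_sq C (fun _ => (1:ℝ)) ν
      simp only [one_mul, one_pow] at this
      rw [hν1] at this
      simpa [Finset.sum_const, nsmul_eq_mul] using this
    have h5 : m / C.card ≤ m * ∑ x ∈ C, (ν x)^2 := by
      rw [div_le_iff₀ hcard]
      calc m = m * 1 := (mul_one m).symm
        _ ≤ m * (C.card * ∑ x ∈ C, (ν x)^2) := by
            apply mul_le_mul_of_nonneg_left h4 hmpos.le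
        _ = m * (∑ x ∈ C, (ν x)^2) * C.card := by ring
    linarith
  -- the admissible set is bounded above
  have hbdd : BddAbove {t : ℝ | ∃ ν : E → ℝ, (∀ x, 0 ≤ ν x) ∧ (∀ x, ν x ≠ 0 → x ∈ C) ∧
      (∑ x ∈ C, ν x = 1) ∧ t = (∑ x ∈ C, ∑ y ∈ C, ν x * g x y * ν y)⁻¹} := by
    refine ⟨C.card / m, ?_⟩
    rintro t ⟨ν, hν0, hνs, hν1, rfl⟩
    have hlb := energy_lb ν hν0 hν1
    have hmc : 0 < m / C.card := div_pos hmpos hcard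
    have : (∑ x ∈ C, ∑ y ∈ C, ν x * g x y * ν y)⁻¹ ≤ (m / C.card)⁻¹ := by
      apply inv_anti₀ hmc hlb
    rwa [inv_div] at this
  -- membership
  have hmem : (∑ x ∈ C, ∑ y ∈ C, μ x * g x y * μ y)⁻¹ ∈
      {t : ℝ | ∃ ν : E → ℝ, (∀ x, 0 ≤ ν x) ∧ (∀ x, ν x ≠ 0 → x ∈ C) ∧
      (∑ x ∈ C, ν x = 1) ∧ t = (∑ x ∈ C, ∑ y ∈ C, ν x * g x y * ν y)⁻¹} :=
    ⟨μ, hμ0, hμs, hμ1, rfl⟩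
  have hEpos : 0 < ∑ x ∈ C, ∑ y ∈ C, μ x * g x y * μ y :=
    lt_of_lt_of_le (div_pos hmpos hcard) (energy_lb μ hμ0 hμ1)
  calc e⁻¹ ≤ (∑ x ∈ C, ∑ y ∈ C, μ x * g x y * μ y)⁻¹ := inv_anti₀ hEpos he
    _ ≤ capacity g C := le_csSup hbdd hmem

theorem stmt4_energy (g : E → E → ℝ) (n : ℕ) (hn : 0 < n) (z : ℕ → E) (C : Finset E)
    (hzC : ∀ a < n, z a ∈ C) :
    ∃ μ : E → ℝ, (∀ x, 0 ≤ μ x) ∧ (∀ x, μ x ≠ 0 → x ∈ C) ∧ (∑ x ∈ C, μ x = 1) ∧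
      (∑ x ∈ C, ∑ y ∈ C, μ x * g x y * μ y) =
        (∑ a ∈ Finset.range n, ∑ b ∈ Finset.range n, g (z a) (z b)) / (n^2 : ℝ) := by
  classical
  set cnt : E → ℝ := fun x => (((Finset.range n).filter (fun a => z a = x)).card : ℝ) with hcnt
  refine ⟨fun x => cnt x / n, ?_, ?_, ?_, ?_⟩
  · intro x; positivity
  · intro x hx
    have : cnt x ≠ 0 := by
      intro h; apply hx; simp [h]
    have hcard : ((Finset.range n).filter (fun a => z a = x)).card ≠ 0 := by
      intro h; apply this; simp [hcnt, h]
    obtain ⟨a, ha⟩ := Finset.card_ne_zero.1 hcard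
    rw [Finset.mem_filter] at ha
    rw [← ha.2]
    exact hzC a (Finset.mem_range.1 ha.1)
  · -- total mass
    have hkey : ∀ f : E → ℝ, ∑ x ∈ C, cnt x * f x = ∑ a ∈ Finset.range n, f (z a) := by
      intro f
      rw [← Finset.sum_fiberwise_of_maps_to (fun a ha => hzC a (Finset.mem_range.1 ha)) (fun a => f (z a))]
      apply Finset.sum_congr rfl
      intro x hx
      rw [hcnt]
      rw [Finset.sum_congr rfl (fun a ha => by rw [(Finset.mem_filter.1 ha).2])]
      simp [mul_comm]
    have := hkey (fun _ => 1)
    simp only [mul_one] at this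
    rw [← Finset.sum_div, this]
    simp [Finset.sum_const]
    omega
  · -- energy identity
    have hkey : ∀ f : E → ℝ, ∑ x ∈ C, cnt x * f x = ∑ a ∈ Finset.range n, f (z a) := by
      intro f
      rw [← Finset.sum_fiberwise_of_maps_to (fun a ha => hzC a (Finset.mem_range.1 ha)) (fun a => f (z a))]
      apply Finset.sum_congr rfl
      intro x hx
      rw [hcnt]
      rw [Finset.sum_congr rfl (fun a ha => by rw [(Finset.mem_filter.1 ha).2])]
      simp [mul_comm]
    have step1 : ∑ x ∈ C, ∑ y ∈ C, (cnt x / n) * g x y * (cnt y / n)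
        = (∑ x ∈ C, cnt x * (∑ y ∈ C, cnt y * g x y)) / (n^2 : ℝ) := by
      rw [Finset.sum_div]
      apply Finset.sum_congr rfl
      intro x _
      rw [Finset.mul_sum, Finset.sum_div]
      apply Finset.sum_congr rfl
      intro y _
      ring
    rw [step1]
    congr 1
    rw [hkey (fun x => ∑ y ∈ C, cnt y * g x y)]
    apply Finset.sum_congr rfl
    intro a _
    exact hkey (fun y => g (z a) y)

theorem stmt4_sum_bound (g : E → E → ℝ) (g0 : ℝ) (hg0 : 0 < g0) (z : ℕ → E)
    (hpos : ∀ x y, 0 < g x y)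
    (hdiag : ∀ a : ℕ, g (z a) (z a) ≤ g0)
    (hsym : ∀ a b : ℕ, g (z a) (z b) = g (z b) (z a))
    (hsmall : ∀ a b : ℕ, a < b → g (z b) (z a) ≤ g0 / (2*(b+1))) :
    ∀ n : ℕ, ∑ a ∈ Finset.range n, ∑ b ∈ Finset.range n, g (z a) (z b) ≤ 2 * g0 * n := by
  intro n
  induction n with
  | zero => simp
  | succ n ih =>
    have expand : ∑ a ∈ Finset.range (n+1), ∑ b ∈ Finset.range (n+1), g (z a) (z b)
        = (∑ a ∈ Finset.range n, ∑ b ∈ Finset.range n, g (z a) (z b))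
          + (∑ b ∈ Finset.range n, g (z n) (z b))
          + ((∑ a ∈ Finset.range n, g (z a) (z n)) + g (z n) (z n)) := by
      rw [Finset.sum_range_succ (fun a => ∑ b ∈ Finset.range (n+1), g (z a) (z b)) n]
      rw [Finset.sum_congr rfl (fun a (_ : a ∈ Finset.range n) => Finset.sum_range_succ (fun b => g (z a) (z b)) n)]
      rw [Finset.sum_range_succ (fun b => g (z n) (z b)) n]
      rw [Finset.sum_add_distrib]
      ring
    rw [expand]
    have hb1 : ∑ b ∈ Finset.range n, g (z n) (z b) ≤ g0 / 2 := by
      calc ∑ b ∈ Finset.range n, g (z n) (z b) ≤ ∑ b ∈ Finset.range n, g0 / (2*(n+1)) := by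
            apply Finset.sum_le_sum
            intro b hb
            exact hsmall b n (Finset.mem_range.1 hb)
        _ = n * (g0 / (2*(n+1))) := by rw [Finset.sum_const]; simp [nsmul_eq_mul, Finset.card_range]
        _ ≤ g0 / 2 := by
            have heq : (n:ℝ) * (g0/(2*((n:ℝ)+1))) = ((n:ℝ)*g0)/(2*((n:ℝ)+1)) := by ring
            rw [heq, div_le_div_iff₀ (by positivity) (by norm_num : (0:ℝ) < 2)]
            nlinarith
    have hb2 : ∑ a ∈ Finset.range n, g (z a) (z n) ≤ g0 / 2 := by
      calc ∑ a ∈ Finset.range n, g (z a) (z n)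
          = ∑ a ∈ Finset.range n, g (z n) (z a) := Finset.sum_congr rfl (fun a _ => hsym a n)
        _ ≤ g0 / 2 := by
            calc ∑ a ∈ Finset.range n, g (z n) (z a) ≤ ∑ a ∈ Finset.range n, g0 / (2*(n+1)) := by
                  apply Finset.sum_le_sum
                  intro a ha
                  exact hsmall a n (Finset.mem_range.1 ha)
              _ = n * (g0 / (2*(n+1))) := by rw [Finset.sum_const]; simp [nsmul_eq_mul, Finset.card_range]
              _ ≤ g0 / 2 := by
                  have heq : (n:ℝ) * (g0/(2*((n:ℝ)+1))) = ((n:ℝ)*g0)/(2*((n:ℝ)+1)) := by ring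
                  rw [heq, div_le_div_iff₀ (by positivity) (by norm_num : (0:ℝ) < 2)]
                  nlinarith
    have := hdiag n
    push_cast
    linarith


end detAux


/-- For a transient reversible random walk on a locally finite connected
weighted graph whose Green function is bounded on the diagonal by g₀, for every
starting point x, P_x-almost surely cap({Z₀,…,Z_k}) → ∞ as k → ∞. -/
theorem stmt_4 {E : Type*} [Countable E] [DecidableEq E]
    [MeasurableSpace E] [MeasurableSingletonClass E]
    (lam : E → ℝ) (hlam : ∀ x, 0 < lam x)
    (P : E → Measure (ℕ → E)) (hprob : ∀ x, IsProbabilityMeasure (P x))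
    (p : E → E → ℝ≥0∞) (hp : ∀ x, ∑' y, p x y = 1)
    (hrev : ∀ x y, ENNReal.ofReal (lam x) * p x y = ENNReal.ofReal (lam y) * p y x)
    (hFDD : ∀ (x : E) (n : ℕ) (w : Fin (n + 1) → E),
      P x {ω | ∀ i : Fin (n + 1), ω i = w i} =
        (if w 0 = x then 1 else 0) * ∏ i : Fin n, p (w i.castSucc) (w i.succ))
    (hfin : ∀ x y : E, (∑' k : ℕ, P x {ω | ω k = y}) < ⊤)
    (g : E → E → ℝ)
    (hg : ∀ x y, g x y = ((∑' k : ℕ, P x {ω | ω k = y}).toReal) / lam y)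
    (hpos : ∀ x y, 0 < g x y)
    (g0 : ℝ) (hdiag : ∀ x, g x x ≤ g0) :
    ∀ x : E, ∀ᵐ ω ∂(P x),
      Filter.Tendsto (fun k => capacity g (Finset.image ω (Finset.range (k + 1))))
        Filter.atTop Filter.atTop := by
  classical
  have hqFull := stmt4_qFull p P hFDD
  have hOne := stmt4_oneStep p P hFDD (fun x y n => hqFull x y n)
  have hqZero := stmt4_qZero p P (fun x y n => hqFull x y n)
  have hCK := stmt4_CK p P hqZero hOne
  have hrevn := stmt4_rev lam p P hrev (stmt4_PP_rev lam p hrev) (fun x y n => hqFull x y n)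
  have hsym := stmt4_gsymm lam hlam P hfin g hg hrevn
  have hLint := stmt4_lintegral_comp P
  intro x
  have g0pos : (0:ℝ) < g0 := lt_of_lt_of_le (hpos x x) (hdiag x)
  -- almost sure good event
  have hae : ∀ᵐ ω ∂(P x), ∀ (F : Finset E) (m : ℕ) (K : ℕ),
      ∃ k, K ≤ k ∧ ∑ y ∈ F, g (ω k) y < g0 / (2*(m+1)) := by
    rw [MeasureTheory.ae_all_iff]
    intro F
    rw [MeasureTheory.ae_all_iff]
    intro m
    rw [MeasureTheory.ae_all_iff]
    intro K
    rw [MeasureTheory.ae_iff]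
    have hnull := stmt4_null lam hlam P hfin g hg hpos hLint hCK x F
      (g0/(2*(m+1))) (by positivity) K
    refine measure_mono_null ?_ hnull
    intro ω hω
    simp only [Set.mem_setOf_eq, not_exists, not_and, not_lt] at hω ⊢
    intro k hk
    exact hω k hk
  filter_upwards [hae] with ω hω
  -- construct the selection times
  obtain ⟨s, hs0, hsprop⟩ : ∃ s : ℕ → ℕ, s 0 = 0 ∧ ∀ ℓ, s ℓ < s (ℓ+1) ∧
      ∑ y ∈ Finset.image ω (Finset.range (s ℓ + 1)), g (ω (s (ℓ+1))) y
        < g0 / (2*((ℓ:ℝ)+2)) := by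
    choose f hf1 hf2 using hω
    let sf : ℕ → ℕ := fun ℓ => Nat.rec 0
      (fun ℓ prev => f (Finset.image ω (Finset.range (prev+1))) (ℓ+1) (prev+1)) ℓ
    have hsucc : ∀ ℓ, sf (ℓ+1)
        = f (Finset.image ω (Finset.range (sf ℓ+1))) (ℓ+1) (sf ℓ+1) := fun ℓ => rfl
    refine ⟨sf, rfl, fun ℓ => ?_⟩
    constructor
    · have h := hf1 (Finset.image ω (Finset.range (sf ℓ+1))) (ℓ+1) (sf ℓ+1)
      rw [hsucc ℓ]; omega
    · have h := hf2 (Finset.image ω (Finset.range (sf ℓ+1))) (ℓ+1) (sf ℓ+1)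
      rw [hsucc ℓ]
      have hcast : (((ℓ+1 : ℕ)):ℝ) + 1 = (ℓ:ℝ) + 2 := by push_cast; ring
      rw [hcast] at h
      exact h
  have hmono : Monotone s := (strictMono_nat_of_lt_succ (fun ℓ => (hsprop ℓ).1)).monotone
  -- pairwise smallness
  have hsmall : ∀ a b : ℕ, a < b → g (ω (s b)) (ω (s a)) ≤ g0 / (2*((b:ℝ)+1)) := by
    intro a b hab
    obtain ⟨c, rfl⟩ : ∃ c, b = c + 1 := ⟨b - 1, by omega⟩
    have hmem : ω (s a) ∈ Finset.image ω (Finset.range (s c + 1)) := by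
      apply Finset.mem_image_of_mem
      rw [Finset.mem_range]
      have : s a ≤ s c := hmono (by omega)
      omega
    have h1 : g (ω (s (c+1))) (ω (s a))
        ≤ ∑ y ∈ Finset.image ω (Finset.range (s c + 1)), g (ω (s (c+1))) y :=
      Finset.single_le_sum (f := fun y => g (ω (s (c+1))) y)
        (fun y _ => (hpos _ y).le) hmem
    have h2 := (hsprop c).2
    have hcast : ((c:ℝ)+2) = (((c+1:ℕ)):ℝ) + 1 := by push_cast; ring
    rw [hcast] at h2
    linarith
  -- conclude the tendsto
  rw [Filter.tendsto_atTop]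
  intro M
  obtain ⟨n0, hn0⟩ := exists_nat_ge (M * (2*g0))
  set n : ℕ := n0 + 1 with hn
  have hnpos : 0 < n := Nat.succ_pos n0
  have hnposR : (0:ℝ) < n := by exact_mod_cast hnpos
  have hMn : M ≤ (n:ℝ) / (2*g0) := by
    rw [le_div_iff₀ (by positivity)]
    have : ((n0:ℝ)) ≤ (n:ℝ) := by exact_mod_cast Nat.le_succ n0
    linarith
  filter_upwards [Filter.eventually_ge_atTop (s n)] with k hk
  set C : Finset E := Finset.image ω (Finset.range (k+1)) with hC
  obtain ⟨μ, hμ0, hμs, hμ1, hμE⟩ := stmt4_energy g n hnpos (fun a => ω (s a)) C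
    (fun a ha => by
      apply Finset.mem_image_of_mem
      rw [Finset.mem_range]
      have : s a ≤ s n := hmono (le_of_lt ha)
      omega)
  have hEbound : (∑ a ∈ Finset.range n, ∑ b ∈ Finset.range n, g (ω (s a)) (ω (s b)))
      ≤ 2*g0*n :=
    stmt4_sum_bound g g0 g0pos (fun a => ω (s a)) hpos (fun a => hdiag _)
      (fun a b => hsym _ _) hsmall n
  have hμE' : (∑ x ∈ C, ∑ y ∈ C, μ x * g x y * μ y) ≤ 2*g0/(n:ℝ) := by
    rw [hμE]
    have heq : (2*g0*(n:ℝ))/((n:ℝ)^2) = 2*g0/(n:ℝ) := by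
      field_simp
    rw [← heq]
    apply div_le_div_of_nonneg_right hEbound (by positivity)
  have hcap := stmt4_cap_lb g hpos C μ hμ0 hμs hμ1 (2*g0/(n:ℝ)) (by positivity) hμE'
  have hinv : (2*g0/(n:ℝ))⁻¹ = (n:ℝ)/(2*g0) := by
    rw [inv_div]
  rw [hinv] at hcap
  calc M ≤ (n:ℝ)/(2*g0) := hMn
    _ ≤ capacity g C := hcap
end

section
/- Let ℐ^u be the interlacement set at level u > 0 on a transient weighted graph with sup_x g(x,x) < ∞, characterized by P^I[ℐ^u ∩ C = ∅] = exp(−u·cap(C)) for finite C ⊆ E. Then P^I-almost surely, for every x ∈ E, the random walk from x hits ℐ^u in finite time with P_x-probability 1. -/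
open MeasureTheory

open scoped ENNReal

section Aux

variable {E : Type*} [Countable E] [DecidableEq E]
  [MeasurableSpace E] [MeasurableSingletonClass E]

/-- restriction of a path to its first `n+1` coordinates -/
def res (n : ℕ) (ω : ℕ → E) : Fin (n+1) → E := fun i => ω i

lemma measurable_res (n : ℕ) : Measurable (res (E := E) n) :=
  measurable_pi_lambda _ (fun i => measurable_pi_apply _)

instance pi_msc {n : ℕ} : MeasurableSingletonClass (Fin (n+1) → E) := by
  constructor
  intro v
  have : ({v} : Set (Fin (n+1) → E)) = ⋂ i, (fun w : Fin (n+1) → E => w i) ⁻¹' {v i} := by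
    ext w; simp [Set.mem_iInter, funext_iff, eq_comm]
  rw [this]
  exact MeasurableSet.iInter (fun i => (measurable_pi_apply i) (measurableSet_singleton _))

/-- partition of a measure through a countable-valued measurable map -/
lemma measure_fiber_partition {α β : Type*} [MeasurableSpace α] [MeasurableSpace β]
    [Countable β] [MeasurableSingletonClass β]
    (μ : Measure α) (f : α → β) (hf : Measurable f) (S : Set β) :
    μ (f ⁻¹' S) = ∑' b : S, μ (f ⁻¹' {(b : β)}) := by
  have h1 : f ⁻¹' S = ⋃ b : S, f ⁻¹' {(b : β)} := by
    ext a; simp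
  rw [h1, measure_iUnion]
  · intro b b' hbb'
    simp only [Function.onFun, Set.disjoint_left]
    intro a ha ha'
    apply hbb'
    apply Subtype.ext
    simp only [Set.mem_preimage, Set.mem_singleton_iff] at ha ha'
    rw [← ha, ← ha']
  · intro b
    exact hf (measurableSet_singleton _)

end Aux

section Walk

set_option linter.unusedSectionVars false

variable {E : Type*} [Countable E] [DecidableEq E]
  [MeasurableSpace E] [MeasurableSingletonClass E]
  (P : E → Measure (ℕ → E)) (p : E → E → ℝ≥0∞)

/-- weight of a finite path -/
noncomputable def Qfd (p : E → E → ℝ≥0∞) (x : E) (n : ℕ) (v : Fin (n+1) → E) : ℝ≥0∞ :=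
  (if v 0 = x then 1 else 0) * ∏ i : Fin n, p (v i.castSucc) (v i.succ)

variable (hFDD : ∀ (x : E) (n : ℕ) (w : Fin (n + 1) → E),
      P x {ω | ∀ i : Fin (n + 1), ω i = w i} =
        (if w 0 = x then 1 else 0) * ∏ i : Fin n, p (w i.castSucc) (w i.succ))

lemma cyl_eq (n : ℕ) (v : Fin (n+1) → E) :
    {ω : ℕ → E | ∀ i : Fin (n+1), ω i = v i} = res n ⁻¹' {v} := by
  ext ω
  simp [res, funext_iff]

include hFDD in
lemma q_eq (x : E) (n : ℕ) (v : Fin (n+1) → E) :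
    P x (res n ⁻¹' {v}) = Qfd p x n v := by
  rw [← cyl_eq, hFDD]; rfl

include hFDD in
lemma T_path (x y : E) (n : ℕ) :
    P x {ω | ω n = y} = ∑' v : Fin (n+1) → E,
      (if v (Fin.last n) = y then Qfd p x n v else 0) := by
  have h1 : {ω : ℕ → E | ω n = y} = res n ⁻¹' {v | v (Fin.last n) = y} := by
    ext ω; simp [res, Fin.last]
  rw [h1, measure_fiber_partition _ _ (measurable_res n),
    tsum_subtype {v : Fin (n+1) → E | v (Fin.last n) = y} (fun v => P x (res n ⁻¹' {v}))]
  apply tsum_congr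
  intro v
  by_cases h : v (Fin.last n) = y
  · rw [Set.indicator_of_mem (show v ∈ {v : Fin (n+1) → E | v (Fin.last n) = y} from h), if_pos h]
    exact q_eq P p hFDD x n v
  · rw [Set.indicator_of_notMem
      (show v ∉ {v : Fin (n+1) → E | v (Fin.last n) = y} from h), if_neg h]

include hFDD in
lemma T_zero (x y : E) : P x {ω | ω 0 = y} = if y = x then 1 else 0 := by
  have h1 : {ω : ℕ → E | ω 0 = y} = {ω | ∀ i : Fin 1, ω i = (fun _ => y) i} := by
    ext ω
    constructor
    · intro h i
      have : (i : ℕ) = 0 := by omega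
      simp only [Set.mem_setOf_eq] at h
      simp [this, h]
    · intro h; exact h 0
  rw [h1, hFDD]
  simp

end Walk

section Walk2

set_option linter.unusedSectionVars false

variable {E : Type*} [Countable E] [DecidableEq E]
  [MeasurableSpace E] [MeasurableSingletonClass E]
  (P : E → Measure (ℕ → E)) (p : E → E → ℝ≥0∞)

/-- snoc equivalence -/
def snocE (E : Type*) (n : ℕ) : ((Fin (n+1) → E) × E) ≃ (Fin (n+2) → E) where
  toFun := fun q => Fin.snoc q.1 q.2
  invFun := fun v => (Fin.init v, v (Fin.last (n+1)))
  left_inv := by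
    intro q
    simp [Fin.init_snoc, Fin.snoc_last]
  right_inv := by
    intro v
    simp [Fin.snoc_init_self]

/-- cons equivalence -/
def consE (E : Type*) (n : ℕ) : (E × (Fin (n+1) → E)) ≃ (Fin (n+2) → E) where
  toFun := fun q => Fin.cons q.1 q.2
  invFun := fun v => (v 0, Fin.tail v)
  left_inv := by
    intro q
    simp [Fin.tail_cons]
  right_inv := by
    intro v
    simp [Fin.cons_self_tail]

lemma qsnoc (x : E) (n : ℕ) (v : Fin (n+1) → E) (z : E) :
    Qfd p x (n+1) (Fin.snoc v z) = Qfd p x n v * p (v (Fin.last n)) z := by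
  unfold Qfd
  rw [Fin.prod_univ_castSucc]
  have h0 : (Fin.snoc v z : Fin (n+2) → E) 0 = v 0 := by
    rw [show (0 : Fin (n+2)) = Fin.castSucc 0 by rfl, Fin.snoc_castSucc]
  have hlast1 : (Fin.snoc v z : Fin (n+2) → E) ((Fin.last n).castSucc) = v (Fin.last n) :=
    Fin.snoc_castSucc ..
  have hlast2 : (Fin.snoc v z : Fin (n+2) → E) ((Fin.last n).succ) = z := by
    rw [Fin.succ_last, Fin.snoc_last]
  have hmid : ∀ i : Fin n,
      p ((Fin.snoc v z : Fin (n+2) → E) i.castSucc.castSucc)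
        ((Fin.snoc v z : Fin (n+2) → E) i.castSucc.succ)
      = p (v i.castSucc) (v i.succ) := by
    intro i
    rw [Fin.snoc_castSucc, show (i.castSucc.succ : Fin (n+2)) = (i.succ).castSucc by
      simp [Fin.ext_iff], Fin.snoc_castSucc]
  rw [h0, hlast1, hlast2]
  rw [Finset.prod_congr rfl (fun i _ => hmid i)]
  ring

lemma qcons (x : E) (n : ℕ) (z : E) (v : Fin (n+1) → E) :
    Qfd p x (n+1) (Fin.cons z v) =
      (if z = x then 1 else 0) * (p z (v 0) *
        ∏ i : Fin n, p (v i.castSucc) (v i.succ)) := by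
  unfold Qfd
  rw [Fin.prod_univ_succ]
  have h0 : (Fin.cons z v : Fin (n+2) → E) 0 = z := Fin.cons_zero ..
  have h1 : (Fin.cons z v : Fin (n+2) → E) ((0 : Fin (n+1)).succ) = v 0 := Fin.cons_succ ..
  have hc0 : ((0 : Fin (n+1)).castSucc : Fin (n+2)) = 0 := by simp [Fin.ext_iff]
  have hmid : ∀ i : Fin n,
      p ((Fin.cons z v : Fin (n+2) → E) (i.succ.castSucc))
        ((Fin.cons z v : Fin (n+2) → E) (i.succ.succ))
      = p (v i.castSucc) (v i.succ) := by
    intro i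
    rw [show (i.succ.castSucc : Fin (n+2)) = (i.castSucc).succ by simp [Fin.ext_iff],
      Fin.cons_succ, Fin.cons_succ]
  rw [hc0, h0, h1]
  rw [Finset.prod_congr rfl (fun i _ => hmid i)]

end Walk2

section Walk3

set_option linter.unusedSectionVars false

variable {E : Type*} [Countable E] [DecidableEq E]
  [MeasurableSpace E] [MeasurableSingletonClass E]
  (P : E → Measure (ℕ → E)) (p : E → E → ℝ≥0∞)
  (hFDD : ∀ (x : E) (n : ℕ) (w : Fin (n + 1) → E),
      P x {ω | ∀ i : Fin (n + 1), ω i = w i} =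
        (if w 0 = x then 1 else 0) * ∏ i : Fin n, p (w i.castSucc) (w i.succ))

include hFDD

lemma Tback (x y : E) (n : ℕ) :
    P x {ω | ω (n+1) = y} = ∑' z : E, P x {ω | ω n = z} * p z y := by
  rw [T_path P p hFDD x y (n+1)]
  rw [← Equiv.tsum_eq (snocE E n)]
  have hLHS : ∀ q : (Fin (n+1) → E) × E,
      (if (snocE E n q) (Fin.last (n+1)) = y then Qfd p x (n+1) (snocE E n q) else 0)
      = (if q.2 = y then Qfd p x n q.1 * p (q.1 (Fin.last n)) q.2 else 0) := by
    intro q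
    have h2 : (snocE E n) q = Fin.snoc q.1 q.2 := rfl
    rw [h2, Fin.snoc_last, qsnoc]
  rw [tsum_congr hLHS, ENNReal.tsum_prod']
  have hinner : ∀ v : Fin (n+1) → E,
      (∑' z : E, if z = y then Qfd p x n v * p (v (Fin.last n)) z else 0)
      = Qfd p x n v * p (v (Fin.last n)) y := by
    intro v
    rw [tsum_eq_single y]
    · simp
    · intro z hz; simp [hz]
  rw [tsum_congr hinner]
  have hR : ∀ z : E, P x {ω | ω n = z} * p z y
      = ∑' v : Fin (n+1) → E, (if v (Fin.last n) = z then Qfd p x n v * p z y else 0) := by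
    intro z
    rw [T_path P p hFDD x z n, ← ENNReal.tsum_mul_right]
    apply tsum_congr; intro v
    split_ifs <;> simp
  rw [tsum_congr hR, ENNReal.tsum_comm]
  apply tsum_congr; intro v
  rw [tsum_eq_single (v (Fin.last n))]
  · simp
  · intro z hz; simp [Ne.symm hz]

lemma Tfront (x y : E) (n : ℕ) :
    P x {ω | ω (n+1) = y} = ∑' z : E, p x z * P z {ω | ω n = y} := by
  rw [T_path P p hFDD x y (n+1)]
  rw [← Equiv.tsum_eq (consE E n)]
  have hLHS : ∀ q : E × (Fin (n+1) → E),
      (if (consE E n q) (Fin.last (n+1)) = y then Qfd p x (n+1) (consE E n q) else 0)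
      = (if q.2 (Fin.last n) = y then
          (if q.1 = x then 1 else 0) * (p q.1 (q.2 0) *
            ∏ i : Fin n, p (q.2 i.castSucc) (q.2 i.succ)) else 0) := by
    intro q
    have h2 : (consE E n) q = Fin.cons q.1 q.2 := rfl
    rw [h2, ← Fin.succ_last, Fin.cons_succ, qcons]
  rw [tsum_congr hLHS, ENNReal.tsum_prod']
  have houter : (∑' (z : E), ∑' (v : Fin (n+1) → E), if v (Fin.last n) = y then
          (if z = x then 1 else 0) * (p z (v 0) *
            ∏ i : Fin n, p (v i.castSucc) (v i.succ)) else 0)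
      = ∑' v : Fin (n+1) → E, (if v (Fin.last n) = y then
          p x (v 0) * ∏ i : Fin n, p (v i.castSucc) (v i.succ) else 0) := by
    rw [tsum_eq_single x]
    · apply tsum_congr; intro v; simp
    · intro z hz
      rw [ENNReal.tsum_eq_zero]
      intro v; simp [hz]
  rw [houter]
  have hR : ∀ z : E, p x z * P z {ω | ω n = y}
      = ∑' v : Fin (n+1) → E, (if v (Fin.last n) = y then
          p x z * ((if v 0 = z then 1 else 0) *
            ∏ i : Fin n, p (v i.castSucc) (v i.succ)) else 0) := by
    intro z
    rw [T_path P p hFDD z y n, ← ENNReal.tsum_mul_left]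
    apply tsum_congr; intro v
    unfold Qfd
    split_ifs <;> simp
  rw [tsum_congr hR, ENNReal.tsum_comm]
  apply tsum_congr; intro v
  rw [tsum_eq_single (v 0)]
  · simp
  · intro z hz; simp [Ne.symm hz]

lemma CK (k m : ℕ) (x y : E) :
    P x {ω | ω (k+m) = y} = ∑' z : E, P x {ω | ω k = z} * P z {ω | ω m = y} := by
  induction m generalizing y with
  | zero =>
    rw [tsum_congr (fun z => by rw [T_zero P p hFDD z y])]
    rw [tsum_eq_single y]
    · simp
    · intro z hz; simp [Ne.symm hz]
  | succ m ih =>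
    have : k + (m+1) = (k+m) + 1 := rfl
    rw [this, Tback P p hFDD x y (k+m)]
    have h1 : ∀ z : E, P x {ω | ω (k+m) = z} * p z y
        = ∑' w : E, P x {ω | ω k = w} * (P w {ω | ω m = z} * p z y) := by
      intro z
      rw [ih z, ← ENNReal.tsum_mul_right]
      apply tsum_congr; intro w; ring
    rw [tsum_congr h1, ENNReal.tsum_comm]
    apply tsum_congr; intro w
    rw [ENNReal.tsum_mul_left, ← Tback P p hFDD w y m]

end Walk3

section Walk4

set_option linter.unusedSectionVars false

variable {E : Type*} [Countable E] [DecidableEq E]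
  [MeasurableSpace E] [MeasurableSingletonClass E]
  (P : E → Measure (ℕ → E)) (p : E → E → ℝ≥0∞) (lam : E → ℝ)
  (hFDD : ∀ (x : E) (n : ℕ) (w : Fin (n + 1) → E),
      P x {ω | ∀ i : Fin (n + 1), ω i = w i} =
        (if w 0 = x then 1 else 0) * ∏ i : Fin n, p (w i.castSucc) (w i.succ))
  (hrev : ∀ x y, ENNReal.ofReal (lam x) * p x y = ENNReal.ofReal (lam y) * p y x)

include hFDD hrev

lemma revn (n : ℕ) (x y : E) :
    ENNReal.ofReal (lam x) * P x {ω | ω n = y}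
      = ENNReal.ofReal (lam y) * P y {ω | ω n = x} := by
  induction n generalizing x y with
  | zero =>
    rw [T_zero P p hFDD x y, T_zero P p hFDD y x]
    by_cases h : y = x
    · subst h; rfl
    · simp [h, Ne.symm h]
  | succ n ih =>
    rw [Tfront P p hFDD x y n, Tback P p hFDD y x n]
    rw [← ENNReal.tsum_mul_left, ← ENNReal.tsum_mul_left]
    apply tsum_congr; intro z
    calc ENNReal.ofReal (lam x) * (p x z * P z {ω | ω n = y})
        = (ENNReal.ofReal (lam x) * p x z) * P z {ω | ω n = y} := by ring
      _ = (ENNReal.ofReal (lam z) * p z x) * P z {ω | ω n = y} := by rw [hrev]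
      _ = p z x * (ENNReal.ofReal (lam z) * P z {ω | ω n = y}) := by ring
      _ = p z x * (ENNReal.ofReal (lam y) * P y {ω | ω n = z}) := by rw [ih]
      _ = ENNReal.ofReal (lam y) * (P y {ω | ω n = z} * p z x) := by ring

end Walk4

section Green

set_option linter.unusedSectionVars false

variable {E : Type*} [Countable E] [DecidableEq E]
  [MeasurableSpace E] [MeasurableSingletonClass E]
  (P : E → Measure (ℕ → E)) (p : E → E → ℝ≥0∞) (lam : E → ℝ) (g : E → E → ℝ)
  (hlam : ∀ x, 0 < lam x)
  (hFDD : ∀ (x : E) (n : ℕ) (w : Fin (n + 1) → E),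
      P x {ω | ∀ i : Fin (n + 1), ω i = w i} =
        (if w 0 = x then 1 else 0) * ∏ i : Fin n, p (w i.castSucc) (w i.succ))
  (hrev : ∀ x y, ENNReal.ofReal (lam x) * p x y = ENNReal.ofReal (lam y) * p y x)
  (hfin : ∀ x y : E, (∑' k : ℕ, P x {ω | ω k = y}) < ⊤)
  (hg : ∀ x y, g x y = ((∑' k : ℕ, P x {ω | ω k = y}).toReal) / lam y)

include hlam hFDD hrev hfin hg in
lemma gsym (x y : E) : g x y = g y x := by
  have h1 : ENNReal.ofReal (lam x) * (∑' k : ℕ, P x {ω | ω k = y})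
      = ENNReal.ofReal (lam y) * (∑' k : ℕ, P y {ω | ω k = x}) := by
    rw [← ENNReal.tsum_mul_left, ← ENNReal.tsum_mul_left]
    exact tsum_congr (fun k => revn P p lam hFDD hrev k x y)
  have h2 := congrArg ENNReal.toReal h1
  rw [ENNReal.toReal_mul, ENNReal.toReal_mul,
    ENNReal.toReal_ofReal (hlam x).le, ENNReal.toReal_ofReal (hlam y).le] at h2
  rw [hg x y, hg y x]
  have hx := (hlam x).ne'
  have hy := (hlam y).ne'
  field_simp
  rw [mul_comm ((∑' k : ℕ, P x {ω | ω k = y}).toReal) (lam x), h2]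

include hFDD in
lemma green_mul (k : ℕ) (x y : E) :
    (∑' z : E, P x {ω | ω k = z} * (∑' m : ℕ, P z {ω | ω m = y}))
      = ∑' m : ℕ, P x {ω | ω (k+m) = y} := by
  have h1 : ∀ z : E, P x {ω | ω k = z} * (∑' m : ℕ, P z {ω | ω m = y})
      = ∑' m : ℕ, P x {ω | ω k = z} * P z {ω | ω m = y} := by
    intro z; rw [ENNReal.tsum_mul_left]
  rw [tsum_congr h1, ENNReal.tsum_comm]
  exact tsum_congr (fun m => (CK P p hFDD k m x y).symm)

include hlam hFDD hg in
lemma time_k_bound (x y : E) (k : ℕ) (c : ℝ) (hc : 0 < c) :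
    P x {ω | c ≤ g (ω k) y}
      ≤ (ENNReal.ofReal (c * lam y))⁻¹ * ∑' m : ℕ, P x {ω | ω (k+m) = y} := by
  set b := ENNReal.ofReal (c * lam y) with hb
  have hb0 : b ≠ 0 := by
    simp [hb, ENNReal.ofReal_eq_zero, not_le, mul_pos hc (hlam y)]
  have hbt : b ≠ ⊤ := ENNReal.ofReal_ne_top
  have hset : {ω : ℕ → E | c ≤ g (ω k) y} = (fun ω : ℕ → E => ω k) ⁻¹' {z | c ≤ g z y} := rfl
  rw [hset, measure_fiber_partition _ _ (measurable_pi_apply k)]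
  rw [tsum_subtype {z : E | c ≤ g z y} (fun z => P x ((fun ω : ℕ → E => ω k) ⁻¹' {z}))]
  have hle : ∀ z : E,
      ({z : E | c ≤ g z y}).indicator (fun z => P x ((fun ω : ℕ → E => ω k) ⁻¹' {z})) z
        ≤ b⁻¹ * (P x {ω | ω k = z} * (∑' m : ℕ, P z {ω | ω m = y})) := by
    intro z
    by_cases hz : z ∈ {z : E | c ≤ g z y}
    · rw [Set.indicator_of_mem hz]
      have hzy : b ≤ ∑' m : ℕ, P z {ω | ω m = y} := by
        apply ENNReal.ofReal_le_of_le_toReal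
        have := hz
        simp only [Set.mem_setOf_eq, hg z y] at this
        calc c * lam y ≤ ((∑' m : ℕ, P z {ω | ω m = y}).toReal / lam y) * lam y := by
              apply mul_le_mul_of_nonneg_right this (hlam y).le
          _ = (∑' m : ℕ, P z {ω | ω m = y}).toReal :=
              div_mul_cancel₀ _ (hlam y).ne'
      have h1 : (1 : ℝ≥0∞) ≤ b⁻¹ * (∑' m : ℕ, P z {ω | ω m = y}) := by
        calc (1:ℝ≥0∞) = b⁻¹ * b := (ENNReal.inv_mul_cancel hb0 hbt).symm
          _ ≤ b⁻¹ * (∑' m : ℕ, P z {ω | ω m = y}) := mul_le_mul_right hzy _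
      calc P x ((fun ω : ℕ → E => ω k) ⁻¹' {z})
          = P x {ω | ω k = z} * 1 := by rw [mul_one]; rfl
        _ ≤ P x {ω | ω k = z} * (b⁻¹ * (∑' m : ℕ, P z {ω | ω m = y})) :=
            mul_le_mul_right h1 _
        _ = b⁻¹ * (P x {ω | ω k = z} * (∑' m : ℕ, P z {ω | ω m = y})) := by ring
    · rw [Set.indicator_of_notMem hz]
      exact zero_le
  calc (∑' z : E, ({z : E | c ≤ g z y}).indicator
          (fun z => P x ((fun ω : ℕ → E => ω k) ⁻¹' {z})) z)
      ≤ ∑' z : E, b⁻¹ * (P x {ω | ω k = z} * (∑' m : ℕ, P z {ω | ω m = y})) :=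
        ENNReal.tsum_le_tsum hle
    _ = b⁻¹ * ∑' z : E, (P x {ω | ω k = z} * (∑' m : ℕ, P z {ω | ω m = y})) :=
        ENNReal.tsum_mul_left
    _ = b⁻¹ * ∑' m : ℕ, P x {ω | ω (k+m) = y} := by rw [green_mul P p hFDD k x y]

end Green

section BadEvent

set_option linter.unusedSectionVars false

variable {E : Type*} [Countable E] [DecidableEq E]
  [MeasurableSpace E] [MeasurableSingletonClass E]
  (P : E → Measure (ℕ → E)) (p : E → E → ℝ≥0∞) (lam : E → ℝ) (g : E → E → ℝ)
  (hlam : ∀ x, 0 < lam x)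
  (hFDD : ∀ (x : E) (n : ℕ) (w : Fin (n + 1) → E),
      P x {ω | ∀ i : Fin (n + 1), ω i = w i} =
        (if w 0 = x then 1 else 0) * ∏ i : Fin n, p (w i.castSucc) (w i.succ))
  (hfin : ∀ x y : E, (∑' k : ℕ, P x {ω | ω k = y}) < ⊤)
  (hg : ∀ x y, g x y = ((∑' k : ℕ, P x {ω | ω k = y}).toReal) / lam y)

include hlam hFDD hfin hg in
lemma bad_zero (x : E) (F : Finset E) (ε : ℝ) (hε : 0 < ε) :
    P x {ω | ∀ k : ℕ, ε ≤ ∑ y ∈ F, g (ω k) y} = 0 := by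
  rcases F.eq_empty_or_nonempty with hF | hF
  · subst hF
    have hemp : {ω : ℕ → E | ∀ k : ℕ, ε ≤ ∑ y ∈ (∅ : Finset E), g (ω k) y} = ∅ := by
      ext ω
      simp only [Finset.sum_empty, Set.mem_setOf_eq, Set.mem_empty_iff_false, iff_false,
        not_forall]
      exact ⟨0, not_le.mpr hε⟩
    rw [hemp, measure_empty]
  · have hcard : (0:ℝ) < F.card := by
      exact_mod_cast Finset.card_pos.mpr hF
    set c := ε / F.card with hc
    have hc0 : 0 < c := div_pos hε hcard
    -- single time bound
    have hsingle : ∀ k : ℕ, P x {ω | ε ≤ ∑ y ∈ F, g (ω k) y}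
        ≤ ∑ y ∈ F, (ENNReal.ofReal (c * lam y))⁻¹ * ∑' m : ℕ, P x {ω | ω (k+m) = y} := by
      intro k
      have hsub : {ω : ℕ → E | ε ≤ ∑ y ∈ F, g (ω k) y}
          ⊆ ⋃ y ∈ F, {ω : ℕ → E | c ≤ g (ω k) y} := by
        intro ω hω
        by_contra hcon
        simp only [Set.mem_iUnion, Set.mem_setOf_eq, not_exists, not_le] at hcon
        have hlt : ∑ y ∈ F, g (ω k) y < ∑ y ∈ F, c :=
          Finset.sum_lt_sum_of_nonempty hF (fun y hy => hcon y hy)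
        rw [Finset.sum_const, nsmul_eq_mul, hc, mul_div_cancel₀ _ hcard.ne'] at hlt
        exact absurd hω (not_le.mpr hlt)
      calc P x {ω | ε ≤ ∑ y ∈ F, g (ω k) y}
          ≤ P x (⋃ y ∈ F, {ω : ℕ → E | c ≤ g (ω k) y}) := measure_mono hsub
        _ ≤ ∑ y ∈ F, P x {ω : ℕ → E | c ≤ g (ω k) y} := measure_biUnion_finset_le F _
        _ ≤ ∑ y ∈ F, (ENNReal.ofReal (c * lam y))⁻¹ * ∑' m : ℕ, P x {ω | ω (k+m) = y} :=
            Finset.sum_le_sum (fun y _ =>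
              time_k_bound P p lam g hlam hFDD hg x y k c hc0)
    -- the bound tends to zero
    have htend : Filter.Tendsto
        (fun k => ∑ y ∈ F, (ENNReal.ofReal (c * lam y))⁻¹ * ∑' m : ℕ, P x {ω | ω (k+m) = y})
        Filter.atTop (nhds 0) := by
      have h0 : (0:ℝ≥0∞) = ∑ y ∈ F, (ENNReal.ofReal (c * lam y))⁻¹ * 0 := by simp
      rw [h0]
      apply tendsto_finset_sum
      intro y _
      apply ENNReal.Tendsto.const_mul
      · have heq : ∀ k : ℕ, (∑' m : ℕ, P x {ω | ω (k+m) = y})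
            = ∑' m : ℕ, P x {ω | ω (m+k) = y} := by
          intro k
          exact tsum_congr (fun m => by rw [Nat.add_comm])
        have := ENNReal.tendsto_sum_nat_add (fun m => P x {ω | ω m = y}) (hfin x y).ne
        apply Filter.Tendsto.congr (fun k => (heq k).symm) this
      · right
        exact ENNReal.inv_ne_top.mpr (by
          simp [ENNReal.ofReal_eq_zero, not_le, mul_pos hc0 (hlam y)])
    have hmono : ∀ k : ℕ, P x {ω | ∀ k : ℕ, ε ≤ ∑ y ∈ F, g (ω k) y}
        ≤ ∑ y ∈ F, (ENNReal.ofReal (c * lam y))⁻¹ * ∑' m : ℕ, P x {ω | ω (k+m) = y} := by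
      intro k
      refine le_trans (measure_mono ?_) (hsingle k)
      intro ω hω
      exact hω k
    have := ge_of_tendsto' htend hmono
    exact le_antisymm this zero_le

end BadEvent

section Cap

set_option linter.unusedSectionVars false

variable {E : Type*} [DecidableEq E]
  (g : E → E → ℝ) (hpos : ∀ x y, 0 < g x y)

/-- the defining set of the capacity -/
def capSet (C : Finset E) : Set ℝ :=
  {t : ℝ | ∃ μ : E → ℝ, (∀ x, 0 ≤ μ x) ∧ (∀ x, μ x ≠ 0 → x ∈ C) ∧
    (∑ x ∈ C, μ x = 1) ∧ t = (∑ x ∈ C, ∑ y ∈ C, μ x * g x y * μ y)⁻¹}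

include hpos in
lemma energy_ge (C : Finset E) (hC : C.Nonempty) (μ : E → ℝ) (hμ0 : ∀ x, 0 ≤ μ x)
    (hμ1 : ∑ x ∈ C, μ x = 1) :
    ((C ×ˢ C).inf' (hC.product hC) (fun q => g q.1 q.2))
      ≤ ∑ x ∈ C, ∑ y ∈ C, μ x * g x y * μ y := by
  set cmin := (C ×ˢ C).inf' (hC.product hC) (fun q => g q.1 q.2) with hcmin
  have h1 : ∀ x ∈ C, ∀ y ∈ C, cmin * (μ x * μ y) ≤ μ x * g x y * μ y := by
    intro x hx y hy
    have hle : cmin ≤ g x y :=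
      Finset.inf'_le (fun q => g q.1 q.2)
        (Finset.mem_product.mpr ⟨hx, hy⟩ : ((x, y) : E × E) ∈ C ×ˢ C)
    have := mul_le_mul_of_nonneg_right hle (mul_nonneg (hμ0 x) (hμ0 y))
    calc cmin * (μ x * μ y) ≤ g x y * (μ x * μ y) := this
      _ = μ x * g x y * μ y := by ring
  calc cmin = cmin * ((∑ x ∈ C, μ x) * (∑ y ∈ C, μ y)) := by rw [hμ1]; ring
    _ = ∑ x ∈ C, ∑ y ∈ C, cmin * (μ x * μ y) := by
        rw [Finset.sum_mul_sum, Finset.mul_sum]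
        congr 1; ext x
        rw [Finset.mul_sum]
    _ ≤ ∑ x ∈ C, ∑ y ∈ C, μ x * g x y * μ y := by
        apply Finset.sum_le_sum; intro x hx
        apply Finset.sum_le_sum; intro y hy
        exact h1 x hx y hy

include hpos in
lemma cap_bddAbove (C : Finset E) (hC : C.Nonempty) : BddAbove (capSet g C) := by
  set cmin := (C ×ˢ C).inf' (hC.product hC) (fun q => g q.1 q.2) with hcmin
  have hcmin0 : 0 < cmin := by
    obtain ⟨q, hq, hqe⟩ := Finset.exists_mem_eq_inf' (hC.product hC) (fun q => g q.1 q.2)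
    rw [hcmin, hqe]
    exact hpos q.1 q.2
  refine ⟨cmin⁻¹, ?_⟩
  rintro t ⟨μ, hμ0, hμC, hμ1, rfl⟩
  have hen := energy_ge g hpos C hC μ hμ0 hμ1
  exact inv_anti₀ hcmin0 hen

include hpos in
lemma cap_nonneg (C : Finset E) : 0 ≤ capacity g C := by
  rcases C.eq_empty_or_nonempty with h | hC
  · subst h
    have : capSet g (∅ : Finset E) = ∅ := by
      ext t
      simp only [capSet, Set.mem_setOf_eq, Set.mem_empty_iff_false, iff_false]
      rintro ⟨μ, hμ0, hμC, hμ1, ht⟩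
      simp at hμ1
    rw [show capacity g (∅:Finset E) = sSup (capSet g (∅:Finset E)) from rfl, this,
      Real.sSup_empty]
  · obtain ⟨c, hc⟩ := hC
    set μ : E → ℝ := fun z => if z = c then 1 else 0 with hμ
    have hmem : (∑ x ∈ C, ∑ y ∈ C, μ x * g x y * μ y)⁻¹ ∈ capSet g C := by
      refine ⟨μ, ?_, ?_, ?_, rfl⟩
      · intro x; rw [hμ]; dsimp; split_ifs <;> norm_num
      · intro x hx
        rw [hμ] at hx; dsimp at hx
        by_cases h : x = c
        · subst h; exact hc
        · simp [h] at hx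
      · rw [hμ]; simp [hc]
    have hbd := cap_bddAbove g hpos C ⟨c, hc⟩
    have hle : (∑ x ∈ C, ∑ y ∈ C, μ x * g x y * μ y)⁻¹ ≤ capacity g C := le_csSup hbd hmem
    have hen : (∑ x ∈ C, ∑ y ∈ C, μ x * g x y * μ y) = g c c := by
      rw [Finset.sum_eq_single c]
      · rw [Finset.sum_eq_single c]
        · simp [hμ]
        · intro y hy hyc; simp [hμ, hyc]
        · intro h; exact absurd hc h
      · intro x hx hxc
        rw [Finset.sum_eq_single c]
        · simp [hμ, hxc]
        · intro y hy hyc; simp [hμ, hyc]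
        · intro h; exact absurd hc h
      · intro h; exact absurd hc h
    refine le_trans ?_ hle
    rw [hen]
    have := hpos c c
    positivity

end Cap

section Cap2

set_option linter.unusedSectionVars false

variable {E : Type*} [DecidableEq E]
  (g : E → E → ℝ) (hpos : ∀ x y, 0 < g x y)

include hpos in
lemma cap_lower (g0 : ℝ) (hdiag : ∀ x, g x x ≤ g0) (C : Finset E) (m : ℕ)
    (y : Fin (m+1) → E) (hinj : Function.Injective y) (hmem : ∀ i, y i ∈ C)
    (hoff : ∑ j : Fin (m+1), ∑ i : Fin (m+1),
        (if i < j then (g (y j) (y i) + g (y i) (y j)) else 0) ≤ 2 * g0) :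
    ((m:ℝ)+1) / (3 * g0) ≤ capacity g C := by
  have hg0 : 0 < g0 := lt_of_lt_of_le (hpos (y 0) (y 0)) (hdiag (y 0))
  have hC : C.Nonempty := ⟨y 0, hmem 0⟩
  set D := Finset.image y Finset.univ with hD
  have hDC : D ⊆ C := by
    intro z hz
    rw [hD, Finset.mem_image] at hz
    obtain ⟨i, _, rfl⟩ := hz
    exact hmem i
  have hcard : D.card = m + 1 := by
    rw [hD, Finset.card_image_of_injective _ hinj, Finset.card_univ, Fintype.card_fin]
  set a : ℝ := ((m:ℝ)+1)⁻¹ with ha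
  have ham : (0:ℝ) < (m:ℝ)+1 := by positivity
  have ha0 : 0 < a := by positivity
  set μ : E → ℝ := fun z => if z ∈ D then a else 0 with hμ
  have hμ0 : ∀ z, 0 ≤ μ z := by
    intro z; rw [hμ]; dsimp; split_ifs; exacts [ha0.le, le_refl 0]
  have hμC : ∀ z, μ z ≠ 0 → z ∈ C := by
    intro z hz
    rw [hμ] at hz; dsimp at hz
    by_cases h : z ∈ D
    · exact hDC h
    · simp [h] at hz
  have hμ1 : ∑ z ∈ C, μ z = 1 := by
    rw [hμ]
    rw [Finset.sum_ite_mem, Finset.inter_eq_right.mpr hDC, Finset.sum_const, hcard,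
      nsmul_eq_mul, ha]
    push_cast
    field_simp
  -- energy identity
  set Eng := ∑ z ∈ C, ∑ w ∈ C, μ z * g z w * μ w with hEngDef
  have hterm : ∀ z w : E, μ z * g z w * μ w
      = if z ∈ D then (if w ∈ D then a * g z w * a else 0) else 0 := by
    intro z w
    rw [hμ]; dsimp
    split_ifs <;> ring
  have hEng : Eng = a^2 * ∑ i : Fin (m+1), ∑ j : Fin (m+1), g (y i) (y j) := by
    rw [hEngDef]
    have h1 : ∀ z ∈ C, ∑ w ∈ C, μ z * g z w * μ w
        = if z ∈ D then (∑ w ∈ D, a * g z w * a) else 0 := by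
      intro z _
      rw [Finset.sum_congr rfl (fun w _ => hterm z w)]
      split_ifs with h
      · rw [Finset.sum_ite_mem, Finset.inter_eq_right.mpr hDC]
      · simp
    rw [Finset.sum_congr rfl h1, Finset.sum_ite_mem, Finset.inter_eq_right.mpr hDC]
    rw [hD, Finset.sum_image (fun i _ j _ h => hinj h)]
    rw [Finset.sum_congr rfl (fun i _ => Finset.sum_image (fun i _ j _ h => hinj h) )]
    rw [Finset.mul_sum]
    congr 1; ext i
    rw [Finset.mul_sum]
    congr 1; ext j
    ring
  -- bound the double sum
  have htri : ∀ i j : Fin (m+1), g (y i) (y j)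
      = (if i = j then g (y i) (y j) else 0) + (if i < j then g (y i) (y j) else 0)
        + (if j < i then g (y i) (y j) else 0) := by
    intro i j
    rcases lt_trichotomy i j with h | h | h
    · simp [h, ne_of_lt h, asymm h]
    · subst h; simp [lt_irrefl]
    · simp [h, (ne_of_lt h).symm, asymm h]
  have hdiagsum : ∑ i : Fin (m+1), ∑ j : Fin (m+1),
      (if i = j then g (y i) (y j) else 0) ≤ ((m:ℝ)+1) * g0 := by
    have h1 : ∀ i : Fin (m+1), ∑ j : Fin (m+1), (if i = j then g (y i) (y j) else 0)
        = g (y i) (y i) := by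
      intro i
      rw [Finset.sum_ite_eq]
      simp
    rw [Finset.sum_congr rfl (fun i _ => h1 i)]
    calc ∑ i : Fin (m+1), g (y i) (y i) ≤ ∑ i : Fin (m+1), g0 :=
          Finset.sum_le_sum (fun i _ => hdiag (y i))
      _ = ((m:ℝ)+1) * g0 := by
          rw [Finset.sum_const, Finset.card_univ, Fintype.card_fin, nsmul_eq_mul]
          push_cast; ring
  have hoffsum : (∑ i : Fin (m+1), ∑ j : Fin (m+1), (if i < j then g (y i) (y j) else 0))
      + (∑ i : Fin (m+1), ∑ j : Fin (m+1), (if j < i then g (y i) (y j) else 0))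
      ≤ 2 * g0 := by
    have h2 : (∑ i : Fin (m+1), ∑ j : Fin (m+1), (if j < i then g (y i) (y j) else 0))
        = ∑ i : Fin (m+1), ∑ j : Fin (m+1), (if i < j then g (y j) (y i) else 0) := by
      rw [Finset.sum_comm]
    rw [h2, ← Finset.sum_add_distrib]
    rw [Finset.sum_congr rfl (fun i _ => (Finset.sum_add_distrib).symm)]
    have h3 : ∀ i j : Fin (m+1),
        ((if i < j then g (y i) (y j) else 0) + (if i < j then g (y j) (y i) else 0))
        = (if i < j then (g (y j) (y i) + g (y i) (y j)) else 0) := by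
      intro i j; split_ifs <;> ring
    rw [Finset.sum_congr rfl (fun i _ => Finset.sum_congr rfl (fun j _ => h3 i j))]
    rw [Finset.sum_comm]
    exact hoff
  have hdouble : ∑ i : Fin (m+1), ∑ j : Fin (m+1), g (y i) (y j)
      ≤ 3 * (((m:ℝ)+1)) * g0 := by
    have := Finset.sum_congr rfl (fun i (_ : i ∈ Finset.univ) =>
      Finset.sum_congr rfl (fun j (_ : j ∈ Finset.univ) => htri i j))
    rw [this]
    rw [Finset.sum_congr rfl (fun i (_ : i ∈ Finset.univ) => Finset.sum_add_distrib),
      Finset.sum_add_distrib]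
    rw [Finset.sum_congr rfl (fun i (_ : i ∈ Finset.univ) => Finset.sum_add_distrib),
      Finset.sum_add_distrib]
    have := hdiagsum
    have := hoffsum
    nlinarith [hg0.le, ham]
  -- energy bounds
  have hEngle : Eng ≤ 3 * g0 / ((m:ℝ)+1) := by
    rw [hEng]
    calc a^2 * ∑ i : Fin (m+1), ∑ j : Fin (m+1), g (y i) (y j)
        ≤ a^2 * (3 * (((m:ℝ)+1)) * g0) := by
          apply mul_le_mul_of_nonneg_left hdouble (by positivity)
      _ = 3 * g0 / ((m:ℝ)+1) := by
          rw [ha]; field_simp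
  have hEngpos : 0 < Eng := by
    rw [hEng]
    apply mul_pos (by positivity)
    have hrow : ∀ i : Fin (m+1), (0:ℝ) ≤ ∑ j : Fin (m+1), g (y i) (y j) :=
      fun i => Finset.sum_nonneg (fun j _ => (hpos _ _).le)
    calc (0:ℝ) < g (y 0) (y 0) := hpos _ _
      _ ≤ ∑ j : Fin (m+1), g (y 0) (y j) :=
          Finset.single_le_sum (f := fun j => g (y 0) (y j))
            (fun j _ => (hpos _ _).le) (Finset.mem_univ 0)
      _ ≤ ∑ i : Fin (m+1), ∑ j : Fin (m+1), g (y i) (y j) :=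
          Finset.single_le_sum (fun i _ => hrow i) (Finset.mem_univ 0)
  -- conclude
  have hmemcap : Eng⁻¹ ∈ capSet g C := ⟨μ, hμ0, hμC, hμ1, by rw [hEngDef]⟩
  have hle : Eng⁻¹ ≤ capacity g C := le_csSup (cap_bddAbove g hpos C hC) hmemcap
  refine le_trans ?_ hle
  calc ((m:ℝ)+1) / (3 * g0) = (3 * g0 / ((m:ℝ)+1))⁻¹ := by
        rw [inv_div]
    _ ≤ Eng⁻¹ := inv_anti₀ hEngpos hEngle

end Cap2

section Config

set_option linter.unusedSectionVars false

variable {E : Type*} [DecidableEq E]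
  (g : E → E → ℝ) (hpos : ∀ x y, 0 < g x y)

lemma snoc_inj {n : ℕ} {y : Fin (n+1) → E} {z : E}
    (hy : Function.Injective y) (hz : ∀ i, z ≠ y i) :
    Function.Injective (Fin.snoc y z : Fin (n+2) → E) := by
  intro a b hab
  by_cases ha : a = Fin.last (n+1) <;> by_cases hb : b = Fin.last (n+1)
  · rw [ha, hb]
  · exfalso
    obtain ⟨b', rfl⟩ := Fin.exists_castSucc_eq.mpr hb
    rw [ha, Fin.snoc_last, Fin.snoc_castSucc] at hab
    exact hz b' hab
  · exfalso
    obtain ⟨a', rfl⟩ := Fin.exists_castSucc_eq.mpr ha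
    rw [hb, Fin.snoc_last, Fin.snoc_castSucc] at hab
    exact hz a' hab.symm
  · obtain ⟨a', rfl⟩ := Fin.exists_castSucc_eq.mpr ha
    obtain ⟨b', rfl⟩ := Fin.exists_castSucc_eq.mpr hb
    rw [Fin.snoc_castSucc, Fin.snoc_castSucc] at hab
    rw [hy hab]

lemma geo_le_one (N : ℕ) : ∑ j ∈ Finset.range N, ((1:ℝ)/2)^(j+1) ≤ 1 := by
  have h : ∀ N : ℕ, ∑ j ∈ Finset.range N, ((1:ℝ)/2)^(j+1) = 1 - (1/2)^N := by
    intro N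
    induction N with
    | zero => simp
    | succ N ih =>
      rw [Finset.sum_range_succ, ih]
      ring
  rw [h]
  have : (0:ℝ) ≤ (1/2)^N := by positivity
  linarith

/-- the property that the path visits points where a given Green sum is small -/
def HitSmall (g : E → E → ℝ) (ω : ℕ → E) : Prop :=
  ∀ (F : Finset E) (ε : ℝ), 0 < ε → ∃ k, ∑ y ∈ F, g (ω k) y < ε

/-- invariant of the recursively constructed configurations -/
def CfgInv (g : E → E → ℝ) (g0 : ℝ) (ω : ℕ → E) (n : ℕ) (y : Fin (n+1) → E) : Prop :=
  Function.Injective y ∧ (∀ i, ∃ k, ω k = y i) ∧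
    ∀ j : Fin (n+1), ∑ i : Fin (n+1), (if i < j then g (y j) (y i) else 0)
      ≤ g0 * (1/2)^((j:ℕ)+1)

include hpos in
lemma config_step (g0 : ℝ) (ω : ℕ → E) (hω : HitSmall g ω) (n : ℕ)
    (y : Fin (n+1) → E) (hy : CfgInv g g0 ω n y) (hg0 : 0 < g0) :
    ∃ y' : Fin (n+2) → E, CfgInv g g0 ω (n+1) y' := by
  obtain ⟨hinj, hran, hrow⟩ := hy
  set C := Finset.image y Finset.univ with hC
  set dmin := (Finset.image (fun i => g (y i) (y i)) Finset.univ).min'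
    (Finset.image_nonempty.mpr Finset.univ_nonempty) with hdmin
  have hdmin0 : 0 < dmin := by
    obtain ⟨v, hv, hve⟩ := Finset.mem_image.mp
      ((Finset.image (fun i => g (y i) (y i)) Finset.univ).min'_mem
        (Finset.image_nonempty.mpr Finset.univ_nonempty))
    rw [hdmin, ← hve]
    exact hpos _ _
  set δ := min (g0 * (1/2)^(n+2)) (dmin/2) with hδ
  have hδ0 : 0 < δ := lt_min (by positivity) (by positivity)
  obtain ⟨k, hk⟩ := hω C δ hδ0
  set z := ω k with hz
  have hsum : ∑ i : Fin (n+1), g z (y i) < δ := by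
    rw [← Finset.sum_image (f := fun w => g z w) (g := y) (fun i _ j _ h => hinj h)]
    exact hk
  have hterm : ∀ i : Fin (n+1), g z (y i) < δ := by
    intro i
    calc g z (y i) ≤ ∑ i : Fin (n+1), g z (y i) :=
        Finset.single_le_sum (f := fun i => g z (y i))
          (fun i _ => (hpos _ _).le) (Finset.mem_univ i)
      _ < δ := hsum
  have hfresh : ∀ i, z ≠ y i := by
    intro i he
    have h1 : dmin ≤ g (y i) (y i) := Finset.min'_le _ _
      (Finset.mem_image.mpr ⟨i, Finset.mem_univ i, rfl⟩)
    have h2 := hterm i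
    rw [he] at h2
    have h3 : δ ≤ dmin / 2 := min_le_right _ _
    linarith
  refine ⟨Fin.snoc y z, snoc_inj hinj hfresh, ?_, ?_⟩
  · intro i
    by_cases hi : i = Fin.last (n+1)
    · rw [hi, Fin.snoc_last]; exact ⟨k, rfl⟩
    · obtain ⟨i', rfl⟩ := Fin.exists_castSucc_eq.mpr hi
      rw [Fin.snoc_castSucc]; exact hran i'
  · intro j
    by_cases hj : j = Fin.last (n+1)
    · subst hj
      have hsplit : ∑ i : Fin (n+2),
          (if i < Fin.last (n+1) then
            g ((Fin.snoc y z : Fin (n+2) → E) (Fin.last (n+1)))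
              ((Fin.snoc y z : Fin (n+2) → E) i) else 0)
          = ∑ i : Fin (n+1), g z (y i) := by
        rw [Fin.sum_univ_castSucc]
        rw [if_neg (lt_irrefl _)]
        rw [add_zero]
        apply Finset.sum_congr rfl
        intro i _
        rw [if_pos (Fin.castSucc_lt_last i), Fin.snoc_last, Fin.snoc_castSucc]
      rw [hsplit]
      have : ((Fin.last (n+1) : Fin (n+2)) : ℕ) = n+1 := rfl
      rw [this]
      have : δ ≤ g0 * (1/2)^(n+1+1) := min_le_left _ _
      linarith
    · obtain ⟨j', rfl⟩ := Fin.exists_castSucc_eq.mpr hj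
      have hsplit : ∑ i : Fin (n+2),
          (if i < j'.castSucc then
            g ((Fin.snoc y z : Fin (n+2) → E) j'.castSucc)
              ((Fin.snoc y z : Fin (n+2) → E) i) else 0)
          = ∑ i : Fin (n+1), (if i < j' then g (y j') (y i) else 0) := by
        rw [Fin.sum_univ_castSucc]
        rw [if_neg (by
          intro hcon
          exact absurd (lt_trans (Fin.castSucc_lt_last j') hcon) (lt_irrefl _))]
        rw [add_zero]
        apply Finset.sum_congr rfl
        intro i _
        rw [Fin.snoc_castSucc, Fin.snoc_castSucc]
        by_cases hij : i < j'
        · rw [if_pos (Fin.castSucc_lt_castSucc_iff.mpr hij), if_pos hij]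
        · rw [if_neg (fun hcon => hij (Fin.castSucc_lt_castSucc_iff.mp hcon)), if_neg hij]
      rw [hsplit]
      have : ((j'.castSucc : Fin (n+2)) : ℕ) = (j' : ℕ) := rfl
      rw [this]
      exact hrow j'

include hpos in
lemma config_exists (g0 : ℝ) (hg0 : 0 < g0) (ω : ℕ → E) [Nonempty E]
    (hω : HitSmall g ω) (n : ℕ) :
    ∃ y : Fin (n+1) → E, CfgInv g g0 ω n y := by
  induction n with
  | zero =>
    refine ⟨fun _ => ω 0, ?_, ?_, ?_⟩
    · intro a b _
      have ha := a.isLt; have hb := b.isLt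
      exact Fin.ext (by omega)
    · intro i; exact ⟨0, rfl⟩
    · intro j
      have hj : j = 0 := Fin.ext (by have := j.isLt; omega)
      subst hj
      have : ∀ i : Fin 1, (if i < (0 : Fin 1) then g (ω 0) (ω 0) else 0) = 0 := by
        intro i
        rw [if_neg (by simp [Fin.lt_def])]
      rw [Finset.sum_congr rfl (fun i _ => this i), Finset.sum_const]
      simp only [smul_zero]
      positivity
  | succ n ih =>
    obtain ⟨y, hy⟩ := ih
    exact config_step g hpos g0 ω hω n y hy hg0

end Config

section Assemble

set_option linter.unusedSectionVars false

variable {E : Type*} [Countable E] [DecidableEq E]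
  [MeasurableSpace E] [MeasurableSingletonClass E]
  (P : E → Measure (ℕ → E)) (p : E → E → ℝ≥0∞) (lam : E → ℝ) (g : E → E → ℝ)
  (hlam : ∀ x, 0 < lam x)
  (hFDD : ∀ (x : E) (n : ℕ) (w : Fin (n + 1) → E),
      P x {ω | ∀ i : Fin (n + 1), ω i = w i} =
        (if w 0 = x then 1 else 0) * ∏ i : Fin n, p (w i.castSucc) (w i.succ))
  (hfin : ∀ x y : E, (∑' k : ℕ, P x {ω | ω k = y}) < ⊤)
  (hg : ∀ x y, g x y = ((∑' k : ℕ, P x {ω | ω k = y}).toReal) / lam y)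
  (hpos : ∀ x y, 0 < g x y)

include hlam hFDD hfin hg in
lemma exceptional_zero (x : E) : P x {ω | ¬ HitSmall g ω} = 0 := by
  classical
  set S : Finset E × ℚ → Set (ℕ → E) := fun Fq =>
    if 0 < Fq.2 then {ω | ∀ k : ℕ, ((Fq.2 : ℝ)) ≤ ∑ y ∈ Fq.1, g (ω k) y} else ∅ with hS
  have hsub : {ω : ℕ → E | ¬ HitSmall g ω} ⊆ ⋃ Fq, S Fq := by
    intro ω hω
    simp only [HitSmall, Set.mem_setOf_eq, not_forall, not_exists, not_lt] at hω
    obtain ⟨F, ε, hε, hωF⟩ := hω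
    obtain ⟨q, hq0, hqε⟩ := exists_rat_btwn hε
    refine Set.mem_iUnion.mpr ⟨(F, q), ?_⟩
    rw [hS]
    simp only []
    rw [if_pos (by exact_mod_cast hq0)]
    intro k
    exact le_trans hqε.le (hωF k)
  apply measure_mono_null hsub
  have hzero : ∀ Fq : Finset E × ℚ, P x (S Fq) = 0 := by
    intro ⟨F, q⟩
    rw [hS]
    simp only []
    split_ifs with hq
    · exact bad_zero P p lam g hlam hFDD hfin hg x F q (by exact_mod_cast hq)
    · exact measure_empty
  refine le_antisymm (le_trans (measure_iUnion_le _) ?_) zero_le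
  simp [hzero]

/-- a good configuration of size `n+1` inside a finite set -/
def GoodCfg (g : E → E → ℝ) (g0 : ℝ) (n : ℕ) (C : Finset E) : Prop :=
  ∃ y : Fin (n+1) → E, Function.Injective y ∧ (∀ i, y i ∈ C) ∧
    ∑ j : Fin (n+1), ∑ i : Fin (n+1),
      (if i < j then (g (y j) (y i) + g (y i) (y j)) else 0) ≤ 2 * g0

include hpos in
lemma goodcfg_cap (g0 : ℝ) (hdiag : ∀ z, g z z ≤ g0) (n : ℕ) (C : Finset E)
    (h : GoodCfg g g0 n C) : ((n:ℝ)+1)/(3*g0) ≤ capacity g C := by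
  obtain ⟨y, h1, h2, h3⟩ := h
  exact cap_lower g hpos g0 hdiag C n y h1 h2 h3

include hpos in
lemma inv_to_goodcfg (hsym : ∀ a b : E, g a b = g b a) (g0 : ℝ) (hg0 : 0 < g0)
    (ω : ℕ → E) (n : ℕ) (y : Fin (n+1) → E) (h : CfgInv g g0 ω n y)
    (C : Finset E) (hmem : ∀ i, y i ∈ C) : GoodCfg g g0 n C := by
  obtain ⟨hinj, hran, hrow⟩ := h
  refine ⟨y, hinj, hmem, ?_⟩
  have hterm : ∀ j i : Fin (n+1),
      (if i < j then (g (y j) (y i) + g (y i) (y j)) else 0)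
      = 2 * (if i < j then g (y j) (y i) else 0) := by
    intro j i
    split_ifs with h
    · rw [hsym (y i) (y j)]; ring
    · ring
  calc ∑ j : Fin (n+1), ∑ i : Fin (n+1),
        (if i < j then (g (y j) (y i) + g (y i) (y j)) else 0)
      = ∑ j : Fin (n+1), 2 * ∑ i : Fin (n+1), (if i < j then g (y j) (y i) else 0) := by
        apply Finset.sum_congr rfl; intro j _
        rw [Finset.mul_sum]
        exact Finset.sum_congr rfl (fun i _ => hterm j i)
    _ ≤ ∑ j : Fin (n+1), 2 * (g0 * (1/2)^((j:ℕ)+1)) := by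
        apply Finset.sum_le_sum; intro j _
        have := hrow j
        linarith
    _ = 2 * g0 * ∑ j : Fin (n+1), ((1:ℝ)/2)^((j:ℕ)+1) := by
        rw [Finset.mul_sum]
        apply Finset.sum_congr rfl; intro j _; ring
    _ ≤ 2 * g0 * 1 := by
        apply mul_le_mul_of_nonneg_left _ (by linarith)
        rw [Fin.sum_univ_eq_sum_range (fun j => ((1:ℝ)/2)^(j+1))]
        exact geo_le_one (n+1)
    _ = 2 * g0 := by ring

include hpos in
lemma hitsmall_reach (hsym : ∀ a b : E, g a b = g b a) (g0 : ℝ) (hg0 : 0 < g0)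
    [Nonempty E] (ω : ℕ → E) (hω : HitSmall g ω) (m : ℕ) :
    ∃ N : ℕ, GoodCfg g g0 m (Finset.image (res N ω) Finset.univ) := by
  obtain ⟨y, hy⟩ := config_exists g hpos g0 hg0 ω hω m
  obtain ⟨hinj, hran, hrow⟩ := hy
  classical
  set k : Fin (m+1) → ℕ := fun i => Classical.choose (hran i) with hk
  set N := Finset.univ.sup k with hN
  refine ⟨N, inv_to_goodcfg g hpos hsym g0 hg0 ω m y
    ⟨hinj, hran, hrow⟩ _ ?_⟩
  intro i
  have hki : k i ≤ N := Finset.le_sup (Finset.mem_univ i)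
  refine Finset.mem_image.mpr ⟨⟨k i, by omega⟩, Finset.mem_univ _, ?_⟩
  rw [res]
  exact Classical.choose_spec (hran i)

end Assemble

section Events

set_option linter.unusedSectionVars false

variable {E : Type*} [Countable E] [DecidableEq E]
  [MeasurableSpace E] [MeasurableSingletonClass E]
  (P : E → Measure (ℕ → E)) (p : E → E → ℝ≥0∞) (lam : E → ℝ) (g : E → E → ℝ)
  (hlam : ∀ x, 0 < lam x)
  (hFDD : ∀ (x : E) (n : ℕ) (w : Fin (n + 1) → E),
      P x {ω | ∀ i : Fin (n + 1), ω i = w i} =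
        (if w 0 = x then 1 else 0) * ∏ i : Fin n, p (w i.castSucc) (w i.succ))
  (hfin : ∀ x y : E, (∑' k : ℕ, P x {ω | ω k = y}) < ⊤)
  (hg : ∀ x y, g x y = ((∑' k : ℕ, P x {ω | ω k = y}).toReal) / lam y)
  (hpos : ∀ x y, 0 < g x y)

/-- set of paths whose first `n+1` points contain no good configuration of size `m+1` -/
def BadSet (g : E → E → ℝ) (g0 : ℝ) (m n : ℕ) : Set (ℕ → E) :=
  {ω | ¬ GoodCfg g g0 m (Finset.image (res n ω) Finset.univ)}

lemma goodcfg_mono (g0 : ℝ) (m : ℕ) {C C' : Finset E} (h : C ⊆ C') :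
    GoodCfg g g0 m C → GoodCfg g g0 m C' := by
  rintro ⟨y, h1, h2, h3⟩
  exact ⟨y, h1, fun i => h (h2 i), h3⟩

lemma badset_meas (g0 : ℝ) (m n : ℕ) : MeasurableSet (BadSet (E := E) g g0 m n) := by
  have : BadSet (E := E) g g0 m n
      = res n ⁻¹' {v : Fin (n+1) → E | ¬ GoodCfg g g0 m (Finset.image v Finset.univ)} := rfl
  rw [this]
  exact measurable_res n (Set.Countable.measurableSet (Set.to_countable _))

lemma badset_anti (g0 : ℝ) (m : ℕ) : Antitone (fun n => BadSet (E := E) g g0 m n) := by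
  intro n n' hnn ω hω
  simp only [BadSet, Set.mem_setOf_eq] at hω ⊢
  intro hgood
  apply hω
  refine goodcfg_mono g g0 m ?_ hgood
  intro z hz
  obtain ⟨i, _, rfl⟩ := Finset.mem_image.mp hz
  exact Finset.mem_image.mpr ⟨⟨(i:ℕ), by omega⟩, Finset.mem_univ _, rfl⟩

include hlam hFDD hfin hg hpos in
lemma badset_tendsto (hsym : ∀ a b : E, g a b = g b a) (g0 : ℝ) (hg0 : 0 < g0)
    [Nonempty E] (x : E) (hprob : IsProbabilityMeasure (P x)) (m : ℕ) :
    Filter.Tendsto (fun n => P x (BadSet (E := E) g g0 m n)) Filter.atTop (nhds 0) := by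
  have hinter : P x (⋂ n, BadSet (E := E) g g0 m n) = 0 := by
    apply measure_mono_null _ (exceptional_zero P p lam g hlam hFDD hfin hg x)
    intro ω hω
    simp only [Set.mem_iInter] at hω
    simp only [Set.mem_setOf_eq]
    intro hsmall
    obtain ⟨N, hN⟩ := hitsmall_reach g hpos hsym g0 hg0 ω hsmall m
    exact hω N hN
  have := MeasureTheory.tendsto_measure_iInter_atTop
    (μ := P x) (s := fun n => BadSet (E := E) g g0 m n)
    (fun n => (badset_meas g g0 m n).nullMeasurableSet)
    (badset_anti g g0 m)
    ⟨0, measure_ne_top _ _⟩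
  rw [hinter] at this
  exact this

lemma pred_partition (x : E) (n : ℕ) (S : Set (Fin (n+1) → E)) :
    P x (res n ⁻¹' S) = ∑' v : Fin (n+1) → E,
      S.indicator (fun v => P x (res n ⁻¹' {v})) v := by
  rw [measure_fiber_partition _ _ (measurable_res n),
    tsum_subtype S (fun v => P x (res n ⁻¹' {v}))]

lemma total_mass (x : E) (hprob : IsProbabilityMeasure (P x)) (n : ℕ) :
    ∑' v : Fin (n+1) → E, P x (res n ⁻¹' {v}) = 1 := by
  have h1 : (Set.univ : Set (ℕ → E)) = res n ⁻¹' Set.univ := rfl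
  have h2 := pred_partition P x n Set.univ
  rw [← h1, measure_univ] at h2
  rw [h2]
  apply tsum_congr
  intro v
  rw [Set.indicator_of_mem (Set.mem_univ v)]

end Events

section Dsum

set_option linter.unusedSectionVars false

variable {E : Type*} [Countable E] [DecidableEq E]
  [MeasurableSpace E] [MeasurableSingletonClass E]
  (P : E → Measure (ℕ → E)) (g : E → E → ℝ)
  (hpos : ∀ x y, 0 < g x y)

include hpos in
lemma Dn_le (x : E) (hprob : IsProbabilityMeasure (P x)) (u g0 : ℝ) (hu : 0 < u)
    (hg0 : 0 < g0) (hdiag : ∀ z : E, g z z ≤ g0) (m n : ℕ)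
    (htotal : ∑' v : Fin (n+1) → E, P x (res n ⁻¹' {v}) = 1)
    (hbad : P x (BadSet g g0 m n) = ∑' v : Fin (n+1) → E,
      ({v : Fin (n+1) → E | ¬ GoodCfg g g0 m (Finset.image v Finset.univ)}).indicator
        (fun v => P x (res n ⁻¹' {v})) v) :
    ∑' v : Fin (n+1) → E, P x (res n ⁻¹' {v})
        * ENNReal.ofReal (Real.exp (-u * capacity g (Finset.image v Finset.univ)))
      ≤ ENNReal.ofReal (Real.exp (-u * (((m:ℝ)+1)/(3*g0)))) + P x (BadSet g g0 m n) := by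
  set η := ENNReal.ofReal (Real.exp (-u * (((m:ℝ)+1)/(3*g0)))) with hη
  set S := {v : Fin (n+1) → E | ¬ GoodCfg g g0 m (Finset.image v Finset.univ)} with hSdef
  have hper : ∀ v : Fin (n+1) → E,
      P x (res n ⁻¹' {v}) * ENNReal.ofReal (Real.exp (-u * capacity g (Finset.image v Finset.univ)))
      ≤ P x (res n ⁻¹' {v}) * η + S.indicator (fun v => P x (res n ⁻¹' {v})) v := by
    intro v
    by_cases hgood : GoodCfg g g0 m (Finset.image v Finset.univ)
    · have hcap := goodcfg_cap g hpos g0 hdiag m (Finset.image v Finset.univ) hgood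
      have hexp : Real.exp (-u * capacity g (Finset.image v Finset.univ))
          ≤ Real.exp (-u * (((m:ℝ)+1)/(3*g0))) := by
        apply Real.exp_le_exp.mpr
        nlinarith
      refine le_trans (le_trans (mul_le_mul_right (ENNReal.ofReal_le_ofReal hexp) _)
        (le_refl _)) ?_
      exact self_le_add_right _ _
    · have hone : ENNReal.ofReal (Real.exp (-u * capacity g (Finset.image v Finset.univ))) ≤ 1 := by
        rw [show (1:ℝ≥0∞) = ENNReal.ofReal 1 by simp]
        apply ENNReal.ofReal_le_ofReal
        rw [Real.exp_le_one_iff]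
        have := cap_nonneg g hpos (Finset.image v Finset.univ)
        nlinarith
      calc P x (res n ⁻¹' {v}) * ENNReal.ofReal (Real.exp (-u * capacity g (Finset.image v Finset.univ)))
          ≤ P x (res n ⁻¹' {v}) * 1 := mul_le_mul_right hone _
        _ = S.indicator (fun v => P x (res n ⁻¹' {v})) v := by
            rw [mul_one, Set.indicator_of_mem (show v ∈ S from hgood)]
        _ ≤ P x (res n ⁻¹' {v}) * η + S.indicator (fun v => P x (res n ⁻¹' {v})) v :=
            le_add_self
  calc ∑' v : Fin (n+1) → E, P x (res n ⁻¹' {v})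
        * ENNReal.ofReal (Real.exp (-u * capacity g (Finset.image v Finset.univ)))
      ≤ ∑' v : Fin (n+1) → E, (P x (res n ⁻¹' {v}) * η
          + S.indicator (fun v => P x (res n ⁻¹' {v})) v) := ENNReal.tsum_le_tsum hper
    _ = (∑' v : Fin (n+1) → E, P x (res n ⁻¹' {v}) * η)
        + ∑' v : Fin (n+1) → E, S.indicator (fun v => P x (res n ⁻¹' {v})) v :=
          ENNReal.tsum_add
    _ = η + P x (BadSet g g0 m n) := by
        rw [ENNReal.tsum_mul_right, htotal, one_mul, ← hbad]

end Dsum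

/-- If ℐ^u is the interlacement set at level u > 0 on a transient
weighted graph with Green function bounded on the diagonal, characterized by
P^I[ℐ^u ∩ C = ∅] = exp(-u·cap(C)) for finite C, then P^I-almost surely, for every
x ∈ E, the random walk started at x hits ℐ^u with P_x-probability one. -/
theorem stmt_5 {E : Type*} [Countable E] [DecidableEq E]
    [MeasurableSpace E] [MeasurableSingletonClass E]
    (lam : E → ℝ) (hlam : ∀ x, 0 < lam x)
    (P : E → Measure (ℕ → E)) (hprob : ∀ x, IsProbabilityMeasure (P x))
    (p : E → E → ℝ≥0∞) (hp : ∀ x, ∑' y, p x y = 1)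
    (hrev : ∀ x y, ENNReal.ofReal (lam x) * p x y = ENNReal.ofReal (lam y) * p y x)
    (hFDD : ∀ (x : E) (n : ℕ) (w : Fin (n + 1) → E),
      P x {ω | ∀ i : Fin (n + 1), ω i = w i} =
        (if w 0 = x then 1 else 0) * ∏ i : Fin n, p (w i.castSucc) (w i.succ))
    (hfin : ∀ x y : E, (∑' k : ℕ, P x {ω | ω k = y}) < ⊤)
    (g : E → E → ℝ)
    (hg : ∀ x y, g x y = ((∑' k : ℕ, P x {ω | ω k = y}).toReal) / lam y)
    (hpos : ∀ x y, 0 < g x y)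
    (g0 : ℝ) (hdiag : ∀ x, g x x ≤ g0)
    {W : Type*} [MeasurableSpace W] (PI : Measure W) [IsProbabilityMeasure PI]
    (u : ℝ) (hu : 0 < u)
    (I : W → Set E)
    (hI : ∀ C : Finset E,
      PI {w | ∀ x ∈ C, x ∉ I w} = ENNReal.ofReal (Real.exp (-u * capacity g C))) :
    ∀ᵐ w ∂PI, ∀ x : E, P x {ω | ∃ k : ℕ, ω k ∈ I w} = 1 := by
  classical
  rcases isEmpty_or_nonempty E with hE | hE
  · exact Filter.Eventually.of_forall (fun w => fun x => (IsEmpty.false x).elim)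
  obtain ⟨c0⟩ := hE
  haveI : Nonempty E := ⟨c0⟩
  have hg0 : 0 < g0 := lt_of_lt_of_le (hpos c0 c0) (hdiag c0)
  have hsym : ∀ a b : E, g a b = g b a :=
    fun a b => gsym P p lam g hlam hFDD hrev hfin hg a b
  rw [MeasureTheory.ae_all_iff]
  intro x
  haveI := hprob x
  set Av : W → Set (ℕ → E) := fun w => {ω | ∀ k : ℕ, ω k ∉ I w} with hAv
  have hAv_meas : ∀ w, MeasurableSet (Av w) := by
    intro w
    have h1 : Av w = ⋂ k : ℕ, (fun ω : ℕ → E => ω k) ⁻¹' ((I w)ᶜ) := by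
      ext ω; simp [hAv]
    rw [h1]
    exact MeasurableSet.iInter (fun k =>
      measurable_pi_apply k (Set.Countable.measurableSet (Set.to_countable _)))
  suffices hz : PI {w | P x (Av w) ≠ 0} = 0 by
    rw [MeasureTheory.ae_iff]
    apply measure_mono_null _ hz
    intro w hw
    simp only [Set.mem_setOf_eq] at hw ⊢
    intro h0
    apply hw
    have hcompl : {ω : ℕ → E | ∃ k : ℕ, ω k ∈ I w} = (Av w)ᶜ := by
      ext ω; simp [hAv]
    rw [hcompl, measure_compl (hAv_meas w) (measure_ne_top _ _), h0, measure_univ, tsub_zero]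
  -- main objects
  set q : (n : ℕ) → (Fin (n+1) → E) → ℝ≥0∞ := fun n v => P x (res n ⁻¹' {v}) with hqdef
  set A : (n : ℕ) → (Fin (n+1) → E) → Set W := fun n v => {w | ∀ i, v i ∉ I w} with hAdef
  set gn : ℕ → W → ℝ≥0∞ := fun n w => ∑' v : Fin (n+1) → E,
    q n v * (toMeasurable PI (A n v)).indicator (fun _ => (1:ℝ≥0∞)) w with hgndef
  -- pointwise bound
  have key1 : ∀ (n : ℕ) (w : W), P x (Av w) ≤ gn n w := by
    intro n w
    have hsub : Av w ⊆ res n ⁻¹' {v : Fin (n+1) → E | ∀ i, v i ∉ I w} := by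
      intro ω hω i
      exact hω (i : ℕ)
    refine le_trans (measure_mono hsub) ?_
    rw [pred_partition P x n _]
    apply ENNReal.tsum_le_tsum
    intro v
    by_cases hv : v ∈ {v : Fin (n+1) → E | ∀ i, v i ∉ I w}
    · rw [Set.indicator_of_mem hv]
      have hwA : w ∈ toMeasurable PI (A n v) :=
        subset_toMeasurable _ _ (show w ∈ A n v from hv)
      apply le_of_eq
      rw [Set.indicator_of_mem hwA, mul_one]
    · rw [Set.indicator_of_notMem hv]
      exact zero_le
  -- measurability
  have gn_meas : ∀ n, Measurable (gn n) := by
    intro n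
    rw [hgndef]
    apply Measurable.ennreal_tsum
    intro v
    exact (measurable_const.indicator (measurableSet_toMeasurable PI (A n v))).const_mul _
  -- integral identity
  have key2 : ∀ n, ∫⁻ w, gn n w ∂PI = ∑' v : Fin (n+1) → E,
      q n v * ENNReal.ofReal (Real.exp (-u * capacity g (Finset.image v Finset.univ))) := by
    intro n
    rw [hgndef]
    rw [MeasureTheory.lintegral_tsum (fun v =>
      ((measurable_const.indicator (measurableSet_toMeasurable PI (A n v))).const_mul
        (q n v)).aemeasurable)]
    apply tsum_congr
    intro v
    rw [MeasureTheory.lintegral_const_mul _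
      (measurable_const.indicator (measurableSet_toMeasurable PI (A n v)))]
    rw [MeasureTheory.lintegral_indicator (measurableSet_toMeasurable PI (A n v)),
      MeasureTheory.setLIntegral_one, measure_toMeasurable]
    congr 1
    have hAset : A n v = {w | ∀ z ∈ Finset.image v Finset.univ, z ∉ I w} := by
      ext w
      simp only [hAdef, Set.mem_setOf_eq, Finset.mem_image, Finset.mem_univ]
      constructor
      · rintro h z ⟨i, _, rfl⟩; exact h i
      · intro h i; exact h (v i) ⟨i, trivial, rfl⟩
    rw [hAset, hI (Finset.image v Finset.univ)]
  -- the per-level zero measure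
  have hj : ∀ j : ℕ, PI {w | ((j:ℝ≥0∞)+1)⁻¹ ≤ P x (Av w)} = 0 := by
    intro j
    set c : ℝ≥0∞ := ((j:ℝ≥0∞)+1)⁻¹ with hcdef
    have hjtop : ((j:ℝ≥0∞)+1) ≠ ⊤ := by
      simp [ENNReal.add_ne_top]
    have hc0 : c ≠ 0 := ENNReal.inv_ne_zero.mpr hjtop
    have hctop : c ≠ ⊤ := by
      rw [hcdef]
      exact ENNReal.inv_ne_top.mpr (by simp)
    have hcinv_top : c⁻¹ ≠ ⊤ := by
      rw [hcdef, inv_inv]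
      exact hjtop
    have hstep : ∀ m n : ℕ, PI {w | c ≤ P x (Av w)}
        ≤ c⁻¹ * ENNReal.ofReal (Real.exp (-u * (((m:ℝ)+1)/(3*g0))))
          + c⁻¹ * P x (BadSet g g0 m n) := by
      intro m n
      have h1 : PI {w | c ≤ P x (Av w)} ≤ PI {w | c ≤ gn n w} :=
        measure_mono (fun w hw => le_trans hw (key1 n w))
      have h2 : c * PI {w | c ≤ gn n w} ≤ ∫⁻ w, gn n w ∂PI :=
        MeasureTheory.mul_meas_ge_le_lintegral₀ ((gn_meas n).aemeasurable) c
      have hbad : P x (BadSet g g0 m n) = ∑' v : Fin (n+1) → E,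
          ({v : Fin (n+1) → E | ¬ GoodCfg g g0 m (Finset.image v Finset.univ)}).indicator
            (fun v => P x (res n ⁻¹' {v})) v := by
        rw [show BadSet (E := E) g g0 m n = res n ⁻¹'
          {v : Fin (n+1) → E | ¬ GoodCfg g g0 m (Finset.image v Finset.univ)} from rfl]
        exact pred_partition P x n _
      have h4 := Dn_le P g hpos x (hprob x) u g0 hu hg0 hdiag m n
        (total_mass P x (hprob x) n) hbad
      calc PI {w | c ≤ P x (Av w)} ≤ PI {w | c ≤ gn n w} := h1
        _ = (c⁻¹ * c) * PI {w | c ≤ gn n w} := by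
            rw [ENNReal.inv_mul_cancel hc0 hctop, one_mul]
        _ = c⁻¹ * (c * PI {w | c ≤ gn n w}) := by ring
        _ ≤ c⁻¹ * ∫⁻ w, gn n w ∂PI := mul_le_mul_right h2 _
        _ ≤ c⁻¹ * (ENNReal.ofReal (Real.exp (-u * (((m:ℝ)+1)/(3*g0))))
              + P x (BadSet g g0 m n)) := by
            apply mul_le_mul_right
            rw [key2 n]
            exact h4
        _ = c⁻¹ * ENNReal.ofReal (Real.exp (-u * (((m:ℝ)+1)/(3*g0))))
              + c⁻¹ * P x (BadSet g g0 m n) := by ring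
    have hlim1 : ∀ m : ℕ, PI {w | c ≤ P x (Av w)}
        ≤ c⁻¹ * ENNReal.ofReal (Real.exp (-u * (((m:ℝ)+1)/(3*g0)))) := by
      intro m
      have htd0 := badset_tendsto P p lam g hlam hFDD hfin hg hpos hsym g0 hg0 x (hprob x) m
      have htd : Filter.Tendsto (fun n =>
          c⁻¹ * ENNReal.ofReal (Real.exp (-u * (((m:ℝ)+1)/(3*g0))))
            + c⁻¹ * P x (BadSet g g0 m n)) Filter.atTop
          (nhds (c⁻¹ * ENNReal.ofReal (Real.exp (-u * (((m:ℝ)+1)/(3*g0)))) + c⁻¹ * 0)) := by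
        exact Filter.Tendsto.const_add _ (ENNReal.Tendsto.const_mul htd0 (Or.inr hcinv_top))
      rw [mul_zero, add_zero] at htd
      exact ge_of_tendsto' htd (fun n => hstep m n)
    have hlim2 : Filter.Tendsto (fun m : ℕ =>
        c⁻¹ * ENNReal.ofReal (Real.exp (-u * (((m:ℝ)+1)/(3*g0))))) Filter.atTop
        (nhds (c⁻¹ * 0)) := by
      apply ENNReal.Tendsto.const_mul _ (Or.inr hcinv_top)
      have hreal : Filter.Tendsto (fun m : ℕ => Real.exp (-u * (((m:ℝ)+1)/(3*g0))))
          Filter.atTop (nhds 0) := by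
        apply Real.tendsto_exp_atBot.comp
        have h5 : Filter.Tendsto (fun m : ℕ => ((m:ℝ)+1)) Filter.atTop Filter.atTop :=
          Filter.tendsto_atTop_add_const_right _ 1 tendsto_natCast_atTop_atTop
        have h6 : Filter.Tendsto (fun m : ℕ => (u/(3*g0)) * ((m:ℝ)+1))
            Filter.atTop Filter.atTop :=
          Filter.Tendsto.const_mul_atTop (by positivity) h5
        have h7 := Filter.tendsto_neg_atTop_atBot.comp h6
        apply Filter.Tendsto.congr _ h7
        intro m
        simp only [Function.comp_apply]
        ring
      have := ENNReal.tendsto_ofReal hreal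
      rw [ENNReal.ofReal_zero] at this
      exact this
    rw [mul_zero] at hlim2
    exact le_antisymm (ge_of_tendsto' hlim2 hlim1) zero_le
  -- union over levels
  have hcover : {w | P x (Av w) ≠ 0} ⊆ ⋃ j : ℕ, {w | ((j:ℝ≥0∞)+1)⁻¹ ≤ P x (Av w)} := by
    intro w hw
    simp only [Set.mem_setOf_eq] at hw
    obtain ⟨n, hn⟩ := ENNReal.exists_inv_nat_lt hw
    refine Set.mem_iUnion.mpr ⟨n, ?_⟩
    simp only [Set.mem_setOf_eq]
    refine le_trans ?_ hn.le
    apply ENNReal.inv_le_inv.mpr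
    exact le_self_add
  apply measure_mono_null hcover
  refine le_antisymm (le_trans (measure_iUnion_le _) ?_) zero_le
  simp [hj]
end

section
/- Let r : ℝ → [0,1] be measurable with r = 0 on (−∞, h) and, ν-a.s. on [h,∞), r ≤ (dQ_{log d}) r (i.e. 0 ≤ r ≤ L_h r ν-a.s.). If λ_h = ‖L_h‖_{L²(ν)→L²(ν)} < 1, then r = 0 ν-a.s. -/
open MeasureTheory ProbabilityTheory

/-- If r : ℝ → [0,1] is measurable, vanishes on (-∞,h), and satisfies
r ≤ L_h r ν-a.s. on [h,∞), where λ_h = ‖L_h‖ < 1 for L_h = π_h(dQ_{log d})π_h on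
L²(ν), then r = 0 ν-a.s. -/
theorem stmt_14 (d : ℕ) (hd : 2 ≤ d)
    (ν : Measure ℝ) (hν : ν = gaussianReal 0 (Real.toNNReal ((d : ℝ) / ((d : ℝ) ^ 2 - 1))))
    (Q : Lp ℝ 2 ν →L[ℝ] Lp ℝ 2 ν)
    (hQ : ∀ f : Lp ℝ 2 ν, (Q f : ℝ → ℝ) =ᵐ[ν]
      fun a => ∫ y, (f : ℝ → ℝ) (a / d + Real.sqrt (1 - 1 / (d : ℝ) ^ 2) * y) ∂ν)
    (h : ℝ) (Ph : Lp ℝ 2 ν →L[ℝ] Lp ℝ 2 ν)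
    (hPh : ∀ f : Lp ℝ 2 ν, (Ph f : ℝ → ℝ) =ᵐ[ν]
      fun a => if h ≤ a then (f : ℝ → ℝ) a else 0)
    (Lh : Lp ℝ 2 ν →L[ℝ] Lp ℝ 2 ν) (hLh : Lh = Ph ∘L ((d : ℝ) • Q) ∘L Ph)
    (hnorm : ‖Lh‖ < 1)
    (r : ℝ → ℝ) (hrm : Measurable r)
    (hr01 : ∀ a, 0 ≤ r a ∧ r a ≤ 1)
    (hrneg : ∀ a, a < h → r a = 0)
    (hrineq : ∀ᵐ a ∂ν, h ≤ a →
      r a ≤ (d : ℝ) * ∫ y, r (a / d + Real.sqrt (1 - 1 / (d : ℝ) ^ 2) * y) ∂ν) :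
    ∀ᵐ a ∂ν, r a = 0 := by
  classical
  set σ : NNReal := Real.toNNReal ((d : ℝ) / ((d : ℝ) ^ 2 - 1)) with hσdef
  have hd2 : (2 : ℝ) ≤ (d : ℝ) := by exact_mod_cast hd
  have hdpos : (0 : ℝ) < d := by linarith
  have hσpos : (0 : ℝ) < (d : ℝ) / ((d : ℝ) ^ 2 - 1) := by
    apply div_pos hdpos; nlinarith
  have hσne : σ ≠ 0 := by
    simp only [hσdef, ne_eq, Real.toNNReal_eq_zero, not_le]
    exact hσpos
  set c : ℝ := Real.sqrt (1 - 1 / (d : ℝ) ^ 2) with hcdef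
  have hcpos : 0 < c := by
    apply Real.sqrt_pos.mpr
    rw [sub_pos]
    rw [div_lt_one (by positivity)]
    nlinarith
  haveI : IsProbabilityMeasure ν := by rw [hν]; infer_instance
  -- r is in L²
  have hmem : MemLp r 2 ν := by
    refine MemLp.of_bound hrm.aestronglyMeasurable 1 (ae_of_all _ fun a => ?_)
    rw [Real.norm_eq_abs, abs_le]
    constructor
    · linarith [(hr01 a).1]
    · exact (hr01 a).2
  set R : Lp ℝ 2 ν := hmem.toLp r with hRdef
  have hR : (R : ℝ → ℝ) =ᵐ[ν] r := hmem.coeFn_toLp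
  -- absolute continuity of the map measure
  have hmapac : ∀ a : ℝ, ν.map (fun y => a / d + c * y) ≪ ν := by
    intro a
    have hcomp : (fun y : ℝ => a / d + c * y) = (fun x => a / d + x) ∘ (fun y => c * y) := rfl
    have hmap : ν.map (fun y => a / d + c * y)
        = gaussianReal (a / d + c * 0) (⟨c ^ 2, sq_nonneg c⟩ * σ) := by
      rw [hcomp, ← Measure.map_map (measurable_const_add _) (measurable_const_mul _), hν,
        gaussianReal_map_const_mul, gaussianReal_map_const_add, add_comm]
      rfl
    rw [hmap]
    refine (gaussianReal_absolutelyContinuous _ ?_).trans ?_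
    · simp only [ne_eq, mul_eq_zero, not_or]
      refine mul_ne_zero ?_ hσne
      intro hc0
      have : c ^ 2 = 0 := congrArg NNReal.toReal hc0
      nlinarith
    · rw [hν]; exact gaussianReal_absolutelyContinuous' _ hσne
  -- integrals of a.e. equal functions along the maps agree
  have hint : ∀ (φ : ℝ → ℝ), φ =ᵐ[ν] r → ∀ a : ℝ,
      (∫ y, φ (a / d + c * y) ∂ν) = ∫ y, r (a / d + c * y) ∂ν := by
    intro φ hφ a
    refine integral_congr_ae ?_
    exact ae_eq_comp (measurable_const_add (a / d)
      |>.comp (measurable_const_mul c)).aemeasurable ((hmapac a).ae_eq hφ)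
  -- Ph R = r a.e.
  have hPhR : ((Ph R : Lp ℝ 2 ν) : ℝ → ℝ) =ᵐ[ν] r := by
    filter_upwards [hPh R, hR] with a h1 h2
    rw [h1]
    by_cases hha : h ≤ a
    · simp [hha, h2]
    · simp [hha, hrneg a (lt_of_not_ge hha)]
  -- Q (Ph R) a.e. equals a ↦ ∫ r(a/d + c y) dν
  have hQPhR : ((Q (Ph R) : Lp ℝ 2 ν) : ℝ → ℝ) =ᵐ[ν]
      fun a => ∫ y, r (a / d + c * y) ∂ν := by
    filter_upwards [hQ (Ph R)] with a h1
    rw [h1]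
    exact hint _ hPhR a
  -- Lh R a.e. equals F
  set F : ℝ → ℝ := fun a => if h ≤ a then (d : ℝ) * ∫ y, r (a / d + c * y) ∂ν else 0
    with hFdef
  have hLhR : ((Lh R : Lp ℝ 2 ν) : ℝ → ℝ) =ᵐ[ν] F := by
    rw [hLh]
    have hsmul : (((d : ℝ) • Q) (Ph R) : ℝ → ℝ) =ᵐ[ν]
        fun a => (d : ℝ) * ∫ y, r (a / d + c * y) ∂ν := by
      have h1 : (((d : ℝ) • Q) (Ph R) : ℝ → ℝ) =ᵐ[ν]
          (d : ℝ) • ((Q (Ph R) : Lp ℝ 2 ν) : ℝ → ℝ) := by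
        simp only [ContinuousLinearMap.smul_apply]
        exact Lp.coeFn_smul _ _
      filter_upwards [h1, hQPhR] with a ha hb
      simp only [Pi.smul_apply, smul_eq_mul] at ha ⊢
      rw [ha, hb]
    filter_upwards [hPh (((d : ℝ) • Q) (Ph R)), hsmul] with a h1 h2
    simp only [ContinuousLinearMap.coe_comp', Function.comp_apply] at h1 ⊢
    rw [h1, hFdef]
    by_cases hha : h ≤ a
    · simp only [hha, if_true]; simpa using h2
    · simp [hha]
  -- a.e. pointwise domination ‖r‖ ≤ ‖Lh R‖
  have hdom : ∀ᵐ a ∂ν, ‖r a‖ ≤ ‖((Lh R : Lp ℝ 2 ν) : ℝ → ℝ) a‖ := by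
    filter_upwards [hLhR, hrineq] with a h1 h2
    rw [h1, Real.norm_eq_abs, Real.norm_eq_abs, abs_of_nonneg (hr01 a).1, hFdef]
    by_cases hha : h ≤ a
    · simp only [hha, if_true]
      have hFnn : 0 ≤ (d : ℝ) * ∫ y, r (a / d + c * y) ∂ν := by
        apply mul_nonneg hdpos.le
        apply integral_nonneg
        intro y; exact (hr01 _).1
      rw [abs_of_nonneg hFnn]
      exact h2 hha
    · simp [hha, hrneg a (lt_of_not_ge hha)]
  -- norm inequality
  have hnR : ‖R‖ ≤ ‖Lh R‖ := by
    rw [Lp.norm_def, Lp.norm_def]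
    apply ENNReal.toReal_mono (Lp.eLpNorm_ne_top _)
    calc eLpNorm (R : ℝ → ℝ) 2 ν = eLpNorm r 2 ν := eLpNorm_congr_ae hR
      _ ≤ eLpNorm ((Lh R : Lp ℝ 2 ν) : ℝ → ℝ) 2 ν := eLpNorm_mono_ae hdom
  have hle : ‖Lh R‖ ≤ ‖Lh‖ * ‖R‖ := Lh.le_opNorm R
  have hR0 : ‖R‖ = 0 := by
    nlinarith [norm_nonneg R, norm_nonneg Lh]
  have : R = 0 := norm_eq_zero.mp hR0
  have hcoe0 : (R : ℝ → ℝ) =ᵐ[ν] 0 := by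
    rw [this]; exact Lp.coeFn_zero _ _ _
  filter_upwards [hR, hcoe0] with a h1 h2
  rw [← h1, h2]; rfl
end

section
/- For all h ∈ ℝ and d ≥ 2, λ_h > d·Φ̄(h(d−1)/√d), where Φ̄(a) = (1/√(2π))∫_a^∞ e^{−t²/2} dt and λ_h = ‖π_h(dQ_{log d})π_h‖_{L²(ν)→L²(ν)} with ν = N(0, d/(d²−1)). In particular λ_0 > d/2. -/
open MeasureTheory ProbabilityTheory RealInnerProductSpace

section Helpers
open Real Set

noncomputable def stdG : Measure ℝ := gaussianReal 0 1

instance : IsProbabilityMeasure stdG := by unfold stdG; infer_instance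

lemma stdG_Ioi (x : ℝ) : (stdG (Ioi x)).toReal
    = (Real.sqrt (2 * Real.pi))⁻¹ * ∫ t in Set.Ioi x, Real.exp (-t ^ 2 / 2) := by
  rw [stdG, gaussianReal_apply_eq_integral 0 one_ne_zero]
  rw [ENNReal.toReal_ofReal
    (integral_nonneg fun t => gaussianPDFReal_nonneg _ _ _)]
  rw [← integral_const_mul]
  refine setIntegral_congr_fun measurableSet_Ioi fun t _ => ?_
  simp [gaussianPDFReal]

lemma stdG_Ici (x : ℝ) : stdG (Ici x) = stdG (Ioi x) := by
  have h0 : stdG {x} = 0 :=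
    gaussianReal_absolutelyContinuous 0 one_ne_zero (measure_singleton x)
  refine le_antisymm ?_ (measure_mono Ioi_subset_Ici_self)
  calc stdG (Ici x) ≤ stdG (Ioi x ∪ {x}) := by
        refine measure_mono fun y hy => ?_
        rcases lt_or_eq_of_le (Set.mem_Ici.1 hy) with h | h
        · exact Or.inl h
        · exact Or.inr (by simp [h.symm])
    _ ≤ stdG (Ioi x) + stdG {x} := measure_union_le _ _
    _ = stdG (Ioi x) := by rw [h0, add_zero]

lemma stdG_strict {x y : ℝ} (hxy : x < y) : stdG (Ici y) < stdG (Ici x) := by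
  have hne : stdG (Ico x y) ≠ 0 := by
    intro h
    have h2 := (gaussianReal_absolutelyContinuous' 0 one_ne_zero) h
    rw [Real.volume_Ico] at h2
    rw [ENNReal.ofReal_eq_zero, sub_nonpos] at h2
    exact absurd h2 (not_le.2 hxy)
  have hd : Disjoint (Ico x y) (Ici y) :=
    (Set.Iio_disjoint_Ici (le_refl y)).mono_left Set.Ico_subset_Iio_self
  have hu : Ico x y ∪ Ici y = Ici x := Ico_union_Ici_eq_Ici hxy.le
  have := measure_union (μ := stdG) hd measurableSet_Ici
  rw [hu] at this
  have hfin : stdG (Ici y) ≠ ⊤ := measure_ne_top _ _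
  calc stdG (Ici y) < stdG (Ico x y) + stdG (Ici y) := by
        rw [add_comm]
        exact ENNReal.lt_add_right hfin hne
    _ = stdG (Ici x) := this.symm

lemma nu_tail {w : ℝ} (hw : 0 < w) (c : ℝ) :
    gaussianReal 0 (Real.toNNReal w) (Ici c) = stdG (Ici (c / Real.sqrt w)) := by
  set σ := Real.sqrt w with hσdef
  have hσ : 0 < σ := Real.sqrt_pos.2 hw
  have hmap : (stdG.map (σ * ·)) = gaussianReal 0 (Real.toNNReal w) := by
    rw [stdG, gaussianReal_map_const_mul]
    congr 1
    · ring
    · ext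
      simp only [NNReal.coe_mul, NNReal.coe_mk, NNReal.coe_one, mul_one]
      rw [Real.coe_toNNReal _ hw.le, hσdef, Real.sq_sqrt hw.le]
  rw [← hmap, Measure.map_apply (measurable_const_mul σ) measurableSet_Ici]
  congr 1
  ext y
  simp only [mem_preimage, mem_Ici]
  rw [div_le_iff₀ hσ, mul_comm]

lemma phibar_zero :
    (Real.sqrt (2 * Real.pi))⁻¹ * (∫ t in Set.Ioi (0:ℝ), Real.exp (-t ^ 2 / 2)) = 1/2 := by
  have h : ∀ t : ℝ, -t ^ 2 / 2 = -(1/2) * t ^ 2 := fun t => by ring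
  simp_rw [h]
  rw [integral_gaussian_Ioi (1/2)]
  have : Real.sqrt (π / (1/2)) = Real.sqrt (2 * π) := by norm_num; ring_nf
  rw [this]
  have h2 : Real.sqrt (2*π) ≠ 0 := by positivity
  field_simp

lemma affine_preimage_null {s : ℝ} (hs : s ≠ 0) {N : Set ℝ} (hN : volume N = 0) (a : ℝ) :
    volume ((fun y => a + s * y) ⁻¹' N) = 0 := by
  set M := toMeasurable volume N with hM
  have hMm : MeasurableSet M := measurableSet_toMeasurable _ _
  have hM0 : volume M = 0 := by rw [hM, measure_toMeasurable]; exact hN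
  have hsub : (fun y => a + s * y) ⁻¹' N ⊆ (fun y => a + s * y) ⁻¹' M :=
    preimage_mono (subset_toMeasurable _ _)
  refine measure_mono_null hsub ?_
  have hcomp : (fun y : ℝ => a + s * y) = (fun y => a + y) ∘ (fun y => s * y) := rfl
  have hmeas : Measurable (fun y : ℝ => a + s * y) :=
    (measurable_const_mul s).const_add a
  have hmap : Measure.map (fun y : ℝ => a + s * y) volume
      = ENNReal.ofReal |s⁻¹| • volume := by
    rw [hcomp, ← Measure.map_map (measurable_const_add a) (measurable_const_mul s),
      Real.map_volume_mul_left hs, Measure.map_smul,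
      map_add_left_eq_self volume a]
  have := Measure.map_apply hmeas hMm (μ := volume)
  rw [hmap] at this
  rw [← this]
  simp [hM0]

end Helpers

/-- For all h ∈ ℝ and d ≥ 2, λ_h > d·Φ̄(h(d-1)/√d), where Φ̄ is the
standard Gaussian tail and λ_h = ‖π_h(dQ_{log d})π_h‖ on L²(ν),
ν = N(0, d/(d²-1)); in particular λ_0 > d/2. -/
theorem stmt_16 (d : ℕ) (hd : 2 ≤ d)
    (ν : Measure ℝ) (hν : ν = gaussianReal 0 (Real.toNNReal ((d : ℝ) / ((d : ℝ) ^ 2 - 1))))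
    (Q : Lp ℝ 2 ν →L[ℝ] Lp ℝ 2 ν)
    (hQ : ∀ f : Lp ℝ 2 ν, (Q f : ℝ → ℝ) =ᵐ[ν]
      fun a => ∫ y, (f : ℝ → ℝ) (a / d + Real.sqrt (1 - 1 / (d : ℝ) ^ 2) * y) ∂ν)
    (Ph : ℝ → (Lp ℝ 2 ν →L[ℝ] Lp ℝ 2 ν))
    (hPh : ∀ (h : ℝ) (f : Lp ℝ 2 ν), (Ph h f : ℝ → ℝ) =ᵐ[ν]
      fun a => if h ≤ a then (f : ℝ → ℝ) a else 0)
    (lam : ℝ → ℝ) (hlam : ∀ h : ℝ, lam h = ‖Ph h ∘L ((d : ℝ) • Q) ∘L Ph h‖)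
    (Phibar : ℝ → ℝ)
    (hPhibar : ∀ a : ℝ, Phibar a =
      (Real.sqrt (2 * Real.pi))⁻¹ * ∫ t in Set.Ioi a, Real.exp (-t ^ 2 / 2)) :
    (∀ h : ℝ, (d : ℝ) * Phibar (h * ((d : ℝ) - 1) / Real.sqrt d) < lam h) ∧
    (d : ℝ) / 2 < lam 0 := by
  have hD : (2:ℝ) ≤ (d:ℝ) := by exact_mod_cast hd
  set D : ℝ := (d : ℝ) with hDdef
  have hD0 : 0 < D := by linarith
  have hD1 : 1 < D := by linarith
  set w : ℝ := D / (D ^ 2 - 1) with hwdef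
  have hw : 0 < w := by
    apply div_pos hD0; nlinarith
  set s : ℝ := Real.sqrt (1 - 1 / D ^ 2) with hsdef
  have hs : 0 < s := by
    apply Real.sqrt_pos.2
    have : 1 / D ^ 2 < 1 := by
      rw [div_lt_one (by positivity)]; nlinarith
    linarith
  set σ : ℝ := Real.sqrt w with hσdef
  have hσ : 0 < σ := Real.sqrt_pos.2 hw
  have hsσ : s * σ = 1 / Real.sqrt D := by
    rw [hsdef, hσdef, ← Real.sqrt_mul (by
      have : 1 / D ^ 2 < 1 := by rw [div_lt_one (by positivity)]; nlinarith
      linarith) w]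
    rw [show (1 - 1 / D ^ 2) * w = 1 / D by
      have h1 : D ^ 2 - 1 ≠ 0 := by nlinarith
      have h2 : D ≠ 0 := hD0.ne'
      rw [hwdef]
      field_simp]
    rw [one_div, Real.sqrt_inv, one_div]
  have hv : (Real.toNNReal w) ≠ 0 := by
    simp only [ne_eq, Real.toNNReal_eq_zero, not_le]
    exact hw
  haveI : IsProbabilityMeasure ν := by rw [hν]; infer_instance
  have habs : ν ≪ volume := by rw [hν]; exact gaussianReal_absolutelyContinuous _ hv
  have habs' : volume ≪ ν := by rw [hν]; exact gaussianReal_absolutelyContinuous' _ hv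
  have hsq : Real.sqrt D * Real.sqrt D = D := Real.mul_self_sqrt hD0.le
  have hsqD : (0:ℝ) < Real.sqrt D := Real.sqrt_pos.2 hD0
  have htail : ∀ c : ℝ, ν (Set.Ici c) = stdG (Set.Ici (c / σ)) := by
    intro c
    rw [hν]
    exact nu_tail hw c
  have key : ∀ h : ℝ,
      D * (stdG (Set.Ici (h * (D - 1) / Real.sqrt D))).toReal < lam h := by
    intro h
    set x0 : ℝ := h * (D - 1) / Real.sqrt D with hx0def
    set t0 : ℝ := (stdG (Set.Ici x0)).toReal with ht0def
    set cc : ℝ → ℝ := fun a => (h - a / D) / s with hccdef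
    set f : ℝ → ℝ := fun a => D * (ν (Set.Ici (cc a))).toReal with hfdef
    have hch : cc h / σ = x0 := by
      rw [hccdef]
      simp only [div_div]
      rw [hsσ, one_div, div_inv_eq_mul, hx0def]
      rw [eq_div_iff hsqD.ne']
      rw [mul_assoc, hsq]
      field_simp
    have hcmono : ∀ a b : ℝ, a ≤ b → cc b ≤ cc a := by
      intro a b hab
      show (h - b / D) / s ≤ (h - a / D) / s
      have h1 : a / D ≤ b / D := by gcongr
      gcongr
    have hcstrict : ∀ a : ℝ, h < a → cc a < cc h := by
      intro a ha
      show (h - a / D) / s < (h - h / D) / s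
      have h1 : h / D < a / D := by gcongr
      gcongr
    -- bounds on f
    have hf_ge : ∀ a : ℝ, h ≤ a → D * t0 ≤ f a := by
      intro a ha
      have h1 : cc a / σ ≤ x0 := by
        rw [← hch]
        gcongr
        exact hcmono h a ha
      have h2 : stdG (Set.Ici x0) ≤ stdG (Set.Ici (cc a / σ)) :=
        measure_mono (Set.Ici_subset_Ici.2 h1)
      have h3 : t0 ≤ (ν (Set.Ici (cc a))).toReal := by
        rw [htail, ht0def]
        exact ENNReal.toReal_le_toReal (measure_ne_top _ _) (measure_ne_top _ _) |>.2 h2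
      rw [hfdef]
      have : D * t0 ≤ D * (ν (Set.Ici (cc a))).toReal := by gcongr
      exact this
    have hf_gt : ∀ a : ℝ, h < a → D * t0 < f a := by
      intro a ha
      have h1 : cc a / σ < x0 := by
        rw [← hch]
        gcongr
        exact hcstrict a ha
      have h2 : stdG (Set.Ici x0) < stdG (Set.Ici (cc a / σ)) := stdG_strict h1
      have h3 : t0 < (ν (Set.Ici (cc a))).toReal := by
        rw [htail, ht0def]
        exact ENNReal.toReal_lt_toReal (measure_ne_top _ _) (measure_ne_top _ _) |>.2 h2
      show D * t0 < D * (ν (Set.Ici (cc a))).toReal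
      exact (mul_lt_mul_iff_right₀ hD0).2 h3
    -- f monotone hence measurable
    have hfmono : Monotone f := by
      intro a b hab
      show D * (ν (Set.Ici (cc a))).toReal ≤ D * (ν (Set.Ici (cc b))).toReal
      have h1 := measure_mono (μ := ν) (Set.Ici_subset_Ici.2 (hcmono a b hab))
      have h2 : (ν (Set.Ici (cc a))).toReal ≤ (ν (Set.Ici (cc b))).toReal :=
        ENNReal.toReal_le_toReal (measure_ne_top _ _) (measure_ne_top _ _) |>.2 h1
      gcongr
    have hfmeas : Measurable f := hfmono.measurable
    have hfbdd : ∀ a : ℝ, ‖f a‖ ≤ D := by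
      intro a
      rw [Real.norm_eq_abs, abs_of_nonneg (by positivity)]
      have h1 : (ν (Set.Ici (cc a))).toReal ≤ 1 := by
        apply ENNReal.toReal_le_of_le_ofReal one_pos.le
        simpa using prob_le_one
      calc D * (ν (Set.Ici (cc a))).toReal ≤ D * 1 := by gcongr
        _ = D := mul_one D
    have hfint : IntegrableOn f (Set.Ici h) ν := by
      refine Integrable.mono' (integrable_const D) hfmeas.aestronglyMeasurable ?_
      exact Filter.Eventually.of_forall hfbdd
    -- the test function g = indicator of [h, ∞)
    set ind : ℝ → ℝ := (Set.Ici h).indicator (fun _ => (1:ℝ)) with hinddef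
    have hind_mem : MemLp ind 2 ν :=
      MemLp.indicator measurableSet_Ici (memLp_const (1:ℝ))
    set g : Lp ℝ 2 ν := hind_mem.toLp ind with hgdef
    have hg : ⇑g =ᵐ[ν] ind := hind_mem.coeFn_toLp
    -- pointwise description of the composed indicator
    have hindicator : ∀ a y : ℝ,
        ind (a / D + s * y) = (Set.Ici (cc a)).indicator (fun _ => (1:ℝ)) y := by
      intro a y
      have hiff : h ≤ a / D + s * y ↔ cc a ≤ y := by
        show _ ↔ (h - a / D) / s ≤ y
        rw [div_le_iff₀ hs, mul_comm]
        constructor <;> intro <;> linarith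
      simp only [hinddef, Set.indicator_apply, Set.mem_Ici, hiff]
    -- the key integral computation for Q g
    have hQg_eq : ∀ a : ℝ,
        (∫ y, (g : ℝ → ℝ) (a / D + s * y) ∂ν) = (ν (Set.Ici (cc a))).toReal := by
      intro a
      have hN : ν {x | (g : ℝ → ℝ) x ≠ ind x} = 0 := by
        have := hg
        rw [Filter.EventuallyEq, ae_iff] at this
        exact this
      have hvol : volume {x | (g : ℝ → ℝ) x ≠ ind x} = 0 := habs' hN
      have hpre : volume ((fun y => a / D + s * y) ⁻¹' {x | (g : ℝ → ℝ) x ≠ ind x}) = 0 :=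
        affine_preimage_null hs.ne' hvol (a / D)
      have hae : (fun y => (g : ℝ → ℝ) (a / D + s * y)) =ᵐ[ν]
          (fun y => ind (a / D + s * y)) := by
        rw [Filter.EventuallyEq, ae_iff]
        exact habs hpre
      rw [integral_congr_ae hae]
      simp_rw [hindicator a]
      rw [integral_indicator_const (1:ℝ) measurableSet_Ici]
      simp
      rfl
    -- P_h g = g
    have hPg : Ph h g = g := by
      apply Lp.ext
      filter_upwards [hPh h g, hg] with a h1 h2
      rw [h1]
      by_cases hha : h ≤ a
      · rw [if_pos hha]
      · rw [if_neg hha, h2, hinddef]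
        simp [Set.indicator_apply, Set.mem_Ici, hha]
    set T := Ph h ∘L (D • Q) ∘L Ph h with hTdef
    have hTg : ⇑(T g) =ᵐ[ν] fun a => if h ≤ a then f a else 0 := by
      have h1 : T g = Ph h ((D • Q) g) := by
        rw [hTdef]
        simp only [ContinuousLinearMap.comp_apply, hPg]
      rw [h1]
      have h2 : (D • Q) g = D • (Q g) := rfl
      rw [h2]
      filter_upwards [hPh h (D • Q g), Lp.coeFn_smul D (Q g), hQ g] with a ha hb hc
      rw [ha]
      by_cases hha : h ≤ a
      · rw [if_pos hha, if_pos hha, hb]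
        show D * (Q g : ℝ → ℝ) a = f a
        rw [hc, hQg_eq a]
      · rw [if_neg hha, if_neg hha]
    -- inner product identities
    have hinner : (inner ℝ g (T g) : ℝ) = ∫ a in Set.Ici h, f a ∂ν := by
      rw [L2.inner_def, ← integral_indicator measurableSet_Ici]
      apply integral_congr_ae
      filter_upwards [hg, hTg] with a h2 h3
      rw [RCLike.inner_apply, starRingEnd_apply, star_trivial, h2, h3, hinddef]
      by_cases hha : h ≤ a
      · simp [Set.indicator_apply, Set.mem_Ici, hha]
      · simp [Set.indicator_apply, Set.mem_Ici, hha]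
    have hm : (inner ℝ g g : ℝ) = (ν (Set.Ici h)).toReal := by
      rw [L2.inner_def]
      have : ∀ᵐ a ∂ν, (inner ℝ ((g:ℝ→ℝ) a) ((g:ℝ→ℝ) a) : ℝ) = ind a := by
        filter_upwards [hg] with a h2
        rw [RCLike.inner_apply, starRingEnd_apply, star_trivial, h2, hinddef]
        by_cases hha : a ∈ Set.Ici h
        · simp [Set.indicator_apply, hha]
        · simp [Set.indicator_apply, hha]
      rw [integral_congr_ae this, hinddef, integral_indicator_const (1:ℝ) measurableSet_Ici]
      simp
      rfl
    have hnormsq : ‖g‖ ^ 2 = (ν (Set.Ici h)).toReal := by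
      rw [← real_inner_self_eq_norm_sq]
      exact hm
    have hmpos : 0 < (ν (Set.Ici h)).toReal := by
      apply ENNReal.toReal_pos _ (measure_ne_top _ _)
      intro h0
      have h1 := habs' h0
      rw [Real.volume_Ici] at h1
      exact ENNReal.top_ne_zero h1
    have hIoipos : 0 < ν (Set.Ioi h) := by
      rw [pos_iff_ne_zero]
      intro h0
      have h1 := habs' h0
      rw [Real.volume_Ioi] at h1
      exact ENNReal.top_ne_zero h1
    -- strict integral inequality
    have hpos : 0 < ∫ a in Set.Ici h, (f a - D * t0) ∂ν := by
      rw [integral_pos_iff_support_of_nonneg_ae]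
      · refine lt_of_lt_of_le ?_ (measure_mono (t := Function.support fun a => f a - D * t0)
          (fun a (ha : a ∈ Set.Ioi h) => sub_ne_zero.2 (hf_gt a ha).ne'))
        rw [Measure.restrict_apply' measurableSet_Ici]
        refine lt_of_lt_of_le hIoipos (measure_mono ?_)
        intro a ha
        exact ⟨ha, Set.mem_Ici.2 (le_of_lt ha)⟩
      · rw [Filter.EventuallyLE, ae_restrict_iff' measurableSet_Ici]
        refine Filter.Eventually.of_forall fun a ha => ?_
        simp only [Pi.zero_apply]
        exact sub_nonneg.2 (hf_ge a ha)
      · exact hfint.sub (integrable_const _)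
    have hsplit : (∫ a in Set.Ici h, (f a - D * t0) ∂ν)
        = (∫ a in Set.Ici h, f a ∂ν) - D * t0 * (ν (Set.Ici h)).toReal := by
      rw [integral_sub hfint (integrable_const _), setIntegral_const]
      simp only [smul_eq_mul, measureReal_def]
      ring
    have hlow : D * t0 * (ν (Set.Ici h)).toReal < ∫ a in Set.Ici h, f a ∂ν := by
      have := hpos
      rw [hsplit] at this
      linarith
    have hup : (∫ a in Set.Ici h, f a ∂ν) ≤ ‖T‖ * (ν (Set.Ici h)).toReal := by
      rw [← hinner]
      calc (inner ℝ g (T g) : ℝ) ≤ ‖g‖ * ‖T g‖ := real_inner_le_norm _ _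
        _ ≤ ‖g‖ * (‖T‖ * ‖g‖) :=
            mul_le_mul_of_nonneg_left (T.le_opNorm g) (norm_nonneg _)
        _ = ‖T‖ * ‖g‖ ^ 2 := by ring
        _ = ‖T‖ * (ν (Set.Ici h)).toReal := by rw [hnormsq]
    have hfinal : D * t0 < ‖T‖ := by
      have h1 : D * t0 * (ν (Set.Ici h)).toReal < ‖T‖ * (ν (Set.Ici h)).toReal :=
        lt_of_lt_of_le hlow hup
      exact lt_of_mul_lt_mul_right h1 (le_of_lt hmpos) |>.trans_le (le_refl _) -- fix
    rw [hlam h]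
    exact hfinal
  constructor
  · intro h
    have hP : Phibar (h * (D - 1) / Real.sqrt D)
        = (stdG (Set.Ici (h * (D - 1) / Real.sqrt D))).toReal := by
      rw [hPhibar, stdG_Ici, stdG_Ioi]
    rw [hP]
    exact key h
  · have h0 : (0:ℝ) * (D - 1) / Real.sqrt D = 0 := by ring
    have := key 0
    rw [h0] at this
    have hP0 : (stdG (Set.Ici (0:ℝ))).toReal = 1 / 2 := by
      rw [stdG_Ici, stdG_Ioi, phibar_zero]
    rw [hP0] at this
    linarith
end
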